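/- arXiv:1404.1724 — 3 statements merged into one kernel-verified Lean document; each statement's English description precedes it below -/
import Mathlib

section
/- Let 0 < R ≤ ∞ and let u be a solution of the boundary-value problem (⋆)&(BC) on (0,R). If u(r) ≥ 0 for all r ∈ (0,R), then 0 < u(r) < s_+ for all r ∈ (0,R). -/
open Set Filter Topology MeasureTheory
open scoped ENNReal NNReal

/-- `γ₊ = ((1-p) + √((p-1)² + 4q))/2`, the positive root of `γ² + (p-1)γ - q = 0`. -/
noncomputable def gammaPlus (p q : ℝ) : ℝ :=
  ((1 - p) + Real.sqrt ((p - 1) ^ 2 + 4 * q)) / 2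

/-- Condition (condF) on the nonlinearity `F` (with `0 < sp` recorded separately). -/
def CondF (F : ℝ → ℝ) (sp : ℝ) : Prop :=
  ContDiff ℝ 1 F ∧ F 0 = 0 ∧ F sp = 0 ∧
    (∀ t ∈ Set.Ioo 0 sp, F t < 0) ∧ (∀ t, sp < t → 0 < F t) ∧ 0 < deriv F sp

/-- The ODE (⋆) `u'' + (p/r) u' - (q/r²) u = F(u)` holds at the point `r`. -/
def ODEAt (p q : ℝ) (F : ℝ → ℝ) (u : ℝ → ℝ) (r : ℝ) : Prop :=
  deriv (deriv u) r + (p / r) * deriv u r - (q / r ^ 2) * u r = F (u r)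

/-- `u` is a solution of the boundary-value problem (⋆)&(BC) on `(0,R)` with `R ∈ (0,∞]`:
`u` is continuous on `[0,R)`, `C²` on `(0,R)`, satisfies (⋆) pointwise on `(0,R)`,
`u(0) = 0`, and `u(r) → s₊` as `r → R⁻` (for `R < ∞`) resp. `r → ∞` (for `R = ∞`). -/
def IsBVPSolution (p q : ℝ) (F : ℝ → ℝ) (sp : ℝ) (R : ℝ≥0∞) (u : ℝ → ℝ) : Prop :=
  ContinuousOn u {r : ℝ | 0 ≤ r ∧ ENNReal.ofReal r < R} ∧
    (∀ r : ℝ, 0 < r → ENNReal.ofReal r < R → ContDiffAt ℝ 2 u r) ∧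
    (∀ r : ℝ, 0 < r → ENNReal.ofReal r < R → ODEAt p q F u r) ∧
    u 0 = 0 ∧
    (∀ R' : ℝ, 0 < R' → R = ENNReal.ofReal R' →
      Filter.Tendsto u (nhdsWithin R' (Set.Iio R')) (nhds sp)) ∧
    (R = ⊤ → Filter.Tendsto u Filter.atTop (nhds sp))

lemma deriv_contDiffAt {u : ℝ → ℝ} {x : ℝ} (h : ContDiffAt ℝ 2 u x) :
    ContDiffAt ℝ 1 (deriv u) x := by
  obtain ⟨t, ht, h2⟩ := h.contDiffOn le_rfl (by simp)
  have hx : x ∈ interior t := mem_interior_iff_mem_nhds.mpr ht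
  have h3 : ContDiffOn ℝ 1 (deriv u) (interior t) :=
    (h2.mono interior_subset).deriv_of_isOpen isOpen_interior (by norm_num)
  exact h3.contDiffAt (isOpen_interior.mem_nhds hx)

lemma no_local_max (p q sp : ℝ) (hq : 0 < q) (hsp : 0 < sp)
    (F : ℝ → ℝ) (hF : CondF F sp) (u : ℝ → ℝ) (r : ℝ) (hr : 0 < r)
    (hC : ContDiffAt ℝ 2 u r) (hODE : ODEAt p q F u r)
    (hmax : IsLocalMax u r) (hge : sp ≤ u r) : False := by
  have hd1 : deriv u r = 0 := hmax.deriv_eq_zero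
  have hur : 0 < u r := lt_of_lt_of_le hsp hge
  have hFu : 0 ≤ F (u r) := by
    rcases eq_or_lt_of_le hge with h | h
    · rw [← h]; exact le_of_eq hF.2.2.1.symm
    · exact (hF.2.2.2.2.1 _ h).le
  have h2 : 0 < deriv (deriv u) r := by
    have h := hODE
    unfold ODEAt at h
    rw [hd1] at h
    have hq' : 0 < q / r ^ 2 * u r := by positivity
    nlinarith
  obtain ⟨t, ht, h2'⟩ := hC.contDiffOn le_rfl (by simp)
  have hxt' : r ∈ interior t := mem_interior_iff_mem_nhds.mpr ht
  have hCt : ContDiffOn ℝ 2 u (interior t) := h2'.mono interior_subset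
  have hC1 : ContDiffOn ℝ 1 (deriv u) (interior t) :=
    hCt.deriv_of_isOpen isOpen_interior (by norm_num)
  have hcont2 : ContinuousOn (deriv (deriv u)) (interior t) :=
    hC1.continuousOn_deriv_of_isOpen isOpen_interior le_rfl
  have hpos : ∀ᶠ x in 𝓝 r, 0 < deriv (deriv u) x :=
    (hcont2.continuousAt (isOpen_interior.mem_nhds hxt')).eventually (eventually_gt_nhds h2)
  have hmem : ∀ᶠ x in 𝓝 r, x ∈ interior t := isOpen_interior.eventually_mem hxt'
  have hmax' : ∀ᶠ x in 𝓝 r, u x ≤ u r := hmax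
  obtain ⟨ε, hε, hball⟩ := Metric.eventually_nhds_iff_ball.mp ((hpos.and hmem).and hmax')
  set δ := ε / 2 with hδdef
  have hδ0 : 0 < δ := by positivity
  have hsub : Icc r (r + δ) ⊆ Metric.ball r ε := by
    intro x hx
    rw [Metric.mem_ball, Real.dist_eq, abs_lt]
    constructor
    · linarith [hx.1]
    · linarith [hx.2]
  have hIcc : Icc r (r + δ) ⊆ interior t := fun x hx => (hball x (hsub hx)).1.2
  have hmono' : StrictMonoOn (deriv u) (Icc r (r + δ)) := by
    apply strictMonoOn_of_deriv_pos (convex_Icc _ _) (hC1.continuousOn.mono hIcc)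
    intro x hx
    rw [interior_Icc] at hx
    exact (hball x (hsub (Ioo_subset_Icc_self hx))).1.1
  have hmono : StrictMonoOn u (Icc r (r + δ)) := by
    apply strictMonoOn_of_deriv_pos (convex_Icc _ _) (hCt.continuousOn.mono hIcc)
    intro x hx
    rw [interior_Icc] at hx
    have := hmono' (left_mem_Icc.mpr (by linarith)) (Ioo_subset_Icc_self hx) hx.1
    rw [hd1] at this
    exact this
  have hlt : u r < u (r + δ) :=
    hmono (left_mem_Icc.mpr (by linarith)) (right_mem_Icc.mpr (by linarith)) (by linarith)
  have hle : u (r + δ) ≤ u r := (hball _ (hsub (right_mem_Icc.mpr (by linarith)))).2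
  linarith

set_option maxHeartbeats 800000 in
lemma local_zero (p q : ℝ) (hp : 0 ≤ p) (hq : 0 < q)
    (F : ℝ → ℝ) (hF : ContDiff ℝ 1 F) (hF0 : F 0 = 0)
    (u : ℝ → ℝ) (r : ℝ) (hr : 0 < r)
    (hC : ∀ᶠ x in 𝓝 r, ContDiffAt ℝ 2 u x ∧ ODEAt p q F u x)
    (h0 : u r = 0) (h0' : deriv u r = 0) : ∀ᶠ x in 𝓝 r, u x = 0 := by
  obtain ⟨L, t, ht, hL⟩ := (hF.contDiffAt (x := (0:ℝ))).exists_lipschitzOnWith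
  obtain ⟨ε, hε, hballt⟩ := Metric.mem_nhds_iff.mp ht
  set δ := ε / 2 with hδdef
  have hδ0 : 0 < δ := by positivity
  set B := Metric.closedBall (0:ℝ) δ with hBdef
  have hBt : B ⊆ t := (Metric.closedBall_subset_ball (by simp [hδdef]; linarith)).trans hballt
  have hLB : LipschitzOnWith L F B := hL.mono hBt
  set c := r / 2 with hcdef
  have hc0 : 0 < c := by positivity
  set τ : ℝ → ℝ := fun s => max s c with hτdef
  set v : ℝ → ℝ × ℝ → ℝ × ℝ :=
    fun s z => (z.2, F z.1 + (q / (τ s) ^ 2) * z.1 - (p / τ s) * z.2) with hvdef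
  set Kr : ℝ := 1 + (L : ℝ) + q / c ^ 2 + p / c with hKrdef
  have hKr1 : 1 ≤ Kr := by
    have : (0:ℝ) ≤ L := L.coe_nonneg
    have h1 : 0 ≤ q / c ^ 2 := by positivity
    have h2 : 0 ≤ p / c := by positivity
    rw [hKrdef]; linarith
  have hKr0 : 0 ≤ Kr := by linarith
  set K : ℝ≥0 := Kr.toNNReal with hKdef
  have hK : (K : ℝ) = Kr := Real.coe_toNNReal _ hKr0
  have hv : ∀ s : ℝ, LipschitzOnWith K (v s) (B ×ˢ (univ : Set ℝ)) := by
    intro s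
    rw [lipschitzOnWith_iff_dist_le_mul]
    rintro ⟨x₁, y₁⟩ ⟨hx₁, -⟩ ⟨x₂, y₂⟩ ⟨hx₂, -⟩
    have hτc : c ≤ τ s := le_max_right _ _
    have hτ0 : 0 < τ s := lt_of_lt_of_le hc0 hτc
    have ha0 : 0 ≤ q / (τ s) ^ 2 := by positivity
    have ha1 : q / (τ s) ^ 2 ≤ q / c ^ 2 := by
      apply div_le_div_of_nonneg_left hq.le (by positivity)
      · nlinarith
    have hb0 : 0 ≤ p / τ s := by positivity
    have hb1 : p / τ s ≤ p / c := by
      apply div_le_div_of_nonneg_left hp hc0 hτc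
    have hFd : dist (F x₁) (F x₂) ≤ (L : ℝ) * dist x₁ x₂ := hLB.dist_le_mul _ hx₁ _ hx₂
    simp only [hvdef, Prod.dist_eq, Real.dist_eq, hK]
    simp only [Real.dist_eq] at hFd
    set d := |x₁ - x₂| ⊔ |y₁ - y₂| with hddef
    have hd1 : |x₁ - x₂| ≤ d := le_max_left _ _
    have hd2 : |y₁ - y₂| ≤ d := le_max_right _ _
    have hd0 : 0 ≤ d := le_trans (abs_nonneg _) hd1
    apply max_le
    · exact hd2.trans (le_mul_of_one_le_left hd0 hKr1)
    · have heq : (F x₁ + q / τ s ^ 2 * x₁ - p / τ s * y₁) -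
          (F x₂ + q / τ s ^ 2 * x₂ - p / τ s * y₂)
          = (F x₁ - F x₂) + (q / τ s ^ 2 * (x₁ - x₂) - p / τ s * (y₁ - y₂)) := by ring
      rw [heq]
      have h1 : |(F x₁ - F x₂) + (q / τ s ^ 2 * (x₁ - x₂) - p / τ s * (y₁ - y₂))|
          ≤ |F x₁ - F x₂| + (|q / τ s ^ 2 * (x₁ - x₂)| + |p / τ s * (y₁ - y₂)|) :=
        (abs_add_le _ _).trans (by gcongr; exact abs_sub _ _)
      rw [abs_mul, abs_mul, abs_of_nonneg ha0, abs_of_nonneg hb0] at h1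
      have h2 : q / τ s ^ 2 * |x₁ - x₂| ≤ q / c ^ 2 * d :=
        mul_le_mul ha1 hd1 (abs_nonneg _) (by positivity)
      have h3 : p / τ s * |y₁ - y₂| ≤ p / c * d :=
        mul_le_mul hb1 hd2 (abs_nonneg _) (by positivity)
      have h4 : |F x₁ - F x₂| ≤ (L : ℝ) * d :=
        hFd.trans (mul_le_mul_of_nonneg_left hd1 L.coe_nonneg)
      have h5 : Kr * d = d + (L : ℝ) * d + q / c ^ 2 * d + p / c * d := by
        rw [hKrdef]; ring
      rw [h5]
      linarith
  set f : ℝ → ℝ × ℝ := fun s => (u s, deriv u s) with hfdef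
  set g : ℝ → ℝ × ℝ := fun _ => ((0:ℝ), (0:ℝ)) with hgdef
  have hCr : ContDiffAt ℝ 2 u r := hC.self_of_nhds.1
  have hcontu : ContinuousAt u r := hCr.continuousAt
  have hBnhds : B ∈ 𝓝 (u r) := by
    rw [h0]; exact Metric.closedBall_mem_nhds _ hδ0
  have huB : ∀ᶠ s in 𝓝 r, u s ∈ B := hcontu.eventually_mem hBnhds
  have hτs : ∀ᶠ s in 𝓝 r, c < s := eventually_gt_nhds (by rw [hcdef]; linarith)
  have hf : ∀ᶠ s in 𝓝 r, HasDerivAt f (v s (f s)) s ∧ f s ∈ B ×ˢ (univ : Set ℝ) := by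
    filter_upwards [hC, huB, hτs] with s hs hsB hcs
    obtain ⟨hCs, hOs⟩ := hs
    have hs0 : (0:ℝ) < s := lt_trans hc0 hcs
    refine ⟨?_, hsB, mem_univ _⟩
    have hdu : HasDerivAt u (deriv u s) s :=
      (hCs.differentiableAt (by norm_num)).hasDerivAt
    have hddu : HasDerivAt (deriv u) (deriv (deriv u) s) s :=
      ((deriv_contDiffAt hCs).differentiableAt (by norm_num)).hasDerivAt
    have hτeq : τ s = s := max_eq_left hcs.le
    have hveq : v s (f s) = (deriv u s, deriv (deriv u) s) := by
      unfold ODEAt at hOs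
      simp only [hvdef, hfdef, hτeq]
      refine Prod.ext rfl ?_
      simp only
      linarith
    rw [hveq]
    exact hdu.prodMk hddu
  have hg : ∀ᶠ s in 𝓝 r, HasDerivAt g (v s (g s)) s ∧ g s ∈ B ×ˢ (univ : Set ℝ) := by
    apply Filter.Eventually.of_forall
    intro s
    constructor
    · have hveq : v s (g s) = ((0:ℝ), (0:ℝ)) := by
        simp only [hvdef, hgdef, hF0]
        norm_num
      rw [hveq]
      exact hasDerivAt_const _ _
    · exact ⟨Metric.mem_closedBall_self hδ0.le, mem_univ _⟩
  have heq : f r = g r := by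
    simp only [hfdef, hgdef, h0, h0']
  have := ODE_solution_unique_of_eventually (.of_forall hv) hf hg heq
  filter_upwards [this] with s hs
  exact congrArg Prod.fst hs

/-- a non-negative solution of (⋆)&(BC) satisfies `0 < u < s₊` on `(0,R)`. -/
theorem stmt0 (p q sp : ℝ) (hp : 0 ≤ p) (hq : 0 < q) (hsp : 0 < sp)
    (F : ℝ → ℝ) (hF : CondF F sp)
    (R : ℝ≥0∞) (hR : 0 < R) (u : ℝ → ℝ)
    (hu : IsBVPSolution p q F sp R u)
    (hnn : ∀ r : ℝ, 0 < r → ENNReal.ofReal r < R → 0 ≤ u r) :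
    ∀ r : ℝ, 0 < r → ENNReal.ofReal r < R → 0 < u r ∧ u r < sp := by
  obtain ⟨hcont, hC2, hODE, hu0, hlim, hlimtop⟩ := hu
  have hIopen : IsOpen {x : ℝ | 0 < x ∧ ENNReal.ofReal x < R} :=
    isOpen_Ioi.inter (isOpen_Iio.preimage ENNReal.continuous_ofReal)
  -- Upper bound
  have upper : ∀ r : ℝ, 0 < r → ENNReal.ofReal r < R → u r < sp := by
    by_contra hcon
    push_neg at hcon
    obtain ⟨r₀, hr₀, hr₀R, hge₀⟩ := hcon
    by_cases hall : ∀ x, 0 < x → ENNReal.ofReal x < R → u x ≤ sp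
    · have hequ : u r₀ = sp := le_antisymm (hall _ hr₀ hr₀R) hge₀
      have hmax : IsLocalMax u r₀ := by
        filter_upwards [hIopen.eventually_mem ⟨hr₀, hr₀R⟩] with x hx
        rw [hequ]; exact hall x hx.1 hx.2
      exact no_local_max p q sp hq hsp F hF u r₀ hr₀ (hC2 _ hr₀ hr₀R) (hODE _ hr₀ hr₀R) hmax hge₀
    · push_neg at hall
      obtain ⟨r₂, hr₂, hr₂R, hgt⟩ := hall
      set cc := (sp + u r₂) / 2 with hccdef
      have hc1 : sp < cc := by rw [hccdef]; linarith
      have hc2 : cc < u r₂ := by rw [hccdef]; linarith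
      rcases eq_or_ne R ⊤ with hRtop | hRne
      · subst hRtop
        obtain ⟨B₀, hB₀⟩ := eventually_atTop.mp ((hlimtop rfl).eventually_lt_const hc1)
        set Bb := max B₀ r₂ with hBbdef
        have hr₂Bb : r₂ ≤ Bb := le_max_right _ _
        have hsubI : Icc (0:ℝ) Bb ⊆ {x | 0 ≤ x ∧ ENNReal.ofReal x < ⊤} :=
          fun x hx => ⟨hx.1, ENNReal.ofReal_lt_top⟩
        obtain ⟨r₁, hr₁mem, hr₁max⟩ := isCompact_Icc.exists_isMaxOn
          ⟨0, left_mem_Icc.mpr (le_trans hr₂.le hr₂Bb)⟩ (hcont.mono hsubI)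
        have hur₁ : u r₂ ≤ u r₁ := hr₁max ⟨hr₂.le, hr₂Bb⟩
        have hr₁pos : 0 < r₁ := by
          rcases hr₁mem.1.lt_or_eq with h | h
          · exact h
          · exfalso; rw [← h, hu0] at hur₁; linarith
        have hmax : IsLocalMax u r₁ := by
          filter_upwards [Ioi_mem_nhds hr₁pos] with x hx
          rcases le_or_gt x Bb with h | h
          · exact hr₁max ⟨(le_of_lt hx), h⟩
          · have := hB₀ x (le_trans (le_max_left _ _) h.le)
            linarith
        exact no_local_max p q sp hq hsp F hF u r₁ hr₁pos
          (hC2 _ hr₁pos ENNReal.ofReal_lt_top) (hODE _ hr₁pos ENNReal.ofReal_lt_top)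
          hmax (by linarith)
      · set R' := R.toReal with hR'def
        have hR'0 : 0 < R' := ENNReal.toReal_pos hR.ne' hRne
        have hRR' : R = ENNReal.ofReal R' := (ENNReal.ofReal_toReal hRne).symm
        have hoflt : ∀ x : ℝ, x < R' → ENNReal.ofReal x < R := fun x hx => by
          rw [hRR']; exact (ENNReal.ofReal_lt_ofReal_iff hR'0).mpr hx
        obtain ⟨B₀, hB₀lt, hB₀⟩ := mem_nhdsLT_iff_exists_Ioo_subset.mp
          ((hlim R' hR'0 hRR').eventually_lt_const hc1)
        have hr₂R' : r₂ < R' := by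
          rw [hRR'] at hr₂R; exact (ENNReal.ofReal_lt_ofReal_iff hR'0).mp hr₂R
        set Bb := max B₀ r₂ with hBbdef
        have hBb : Bb < R' := max_lt hB₀lt hr₂R'
        have hr₂Bb : r₂ ≤ Bb := le_max_right _ _
        have hsubI : Icc (0:ℝ) Bb ⊆ {x | 0 ≤ x ∧ ENNReal.ofReal x < R} :=
          fun x hx => ⟨hx.1, hoflt x (lt_of_le_of_lt hx.2 hBb)⟩
        obtain ⟨r₁, hr₁mem, hr₁max⟩ := isCompact_Icc.exists_isMaxOn
          ⟨0, left_mem_Icc.mpr (le_trans hr₂.le hr₂Bb)⟩ (hcont.mono hsubI)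
        have hur₁ : u r₂ ≤ u r₁ := hr₁max ⟨hr₂.le, hr₂Bb⟩
        have hr₁pos : 0 < r₁ := by
          rcases hr₁mem.1.lt_or_eq with h | h
          · exact h
          · exfalso; rw [← h, hu0] at hur₁; linarith
        have hr₁R : ENNReal.ofReal r₁ < R := hoflt _ (lt_of_le_of_lt hr₁mem.2 hBb)
        have hmax : IsLocalMax u r₁ := by
          filter_upwards [Ioo_mem_nhds hr₁pos (lt_of_le_of_lt hr₁mem.2 hBb)] with x hx
          rcases le_or_gt x Bb with h | h
          · exact hr₁max ⟨hx.1.le, h⟩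
          · have hxcc : u x < cc := hB₀ ⟨lt_of_le_of_lt (le_max_left _ _) h, hx.2⟩
            linarith
        exact no_local_max p q sp hq hsp F hF u r₁ hr₁pos
          (hC2 _ hr₁pos hr₁R) (hODE _ hr₁pos hr₁R) hmax (by linarith)
  -- Lower bound
  have lower : ∀ r : ℝ, 0 < r → ENNReal.ofReal r < R → 0 < u r := by
    by_contra hcon
    push_neg at hcon
    obtain ⟨r₀, hr₀, hr₀R, hle₀⟩ := hcon
    have hu00 : u r₀ = 0 := le_antisymm hle₀ (hnn _ hr₀ hr₀R)
    set I := {x : ℝ | 0 < x ∧ ENNReal.ofReal x < R} with hIdef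
    have hr₀I : r₀ ∈ I := ⟨hr₀, hr₀R⟩
    have hIconn : IsPreconnected I := by
      apply Set.OrdConnected.isPreconnected
      constructor
      rintro x hx y hy z hz
      exact ⟨lt_of_lt_of_le hx.1 hz.1, lt_of_le_of_lt (ENNReal.ofReal_le_ofReal hz.2) hy.2⟩
    set O := I ∩ {x : ℝ | ∀ᶠ y in 𝓝 x, u y = 0} with hOdef
    have hO2 : {x : ℝ | ∀ᶠ y in 𝓝 x, u y = 0} = interior {y : ℝ | u y = 0} := by
      ext x; rw [mem_interior_iff_mem_nhds]; rfl
    have hOopen : IsOpen O := hIopen.inter (hO2 ▸ isOpen_interior)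
    have key : ∀ x ∈ I, u x = 0 → deriv u x = 0 → ∀ᶠ y in 𝓝 x, u y = 0 := by
      intro x hx hux hux'
      refine local_zero p q hp hq F hF.1 hF.2.1 u x hx.1 ?_ hux hux'
      filter_upwards [hIopen.eventually_mem hx] with y hy
      exact ⟨hC2 y hy.1 hy.2, hODE y hy.1 hy.2⟩
    have hne : (I ∩ O).Nonempty := by
      have hmin : IsLocalMin u r₀ := by
        filter_upwards [hIopen.eventually_mem hr₀I] with y hy
        rw [hu00]; exact hnn y hy.1 hy.2
      exact ⟨r₀, hr₀I, hr₀I, key r₀ hr₀I hu00 hmin.deriv_eq_zero⟩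
    have hclosure : closure O ∩ I ⊆ O := by
      rintro x ⟨hxc, hxI⟩
      have hCx := hC2 x hxI.1 hxI.2
      have hux : u x = 0 := by
        have h1 := hCx.continuousAt.continuousWithinAt.mem_closure_image (s := O) hxc
        have himg : u '' O ⊆ {0} := by
          rintro - ⟨y, hy, rfl⟩
          exact hy.2.self_of_nhds
        have := (closure_mono himg) h1
        simpa using this
      have hux' : deriv u x = 0 := by
        have h1 := (deriv_contDiffAt hCx).continuousAt.continuousWithinAt.mem_closure_image
          (s := O) hxc
        have himg : deriv u '' O ⊆ {0} := by
          rintro - ⟨y, hy, rfl⟩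
          have : deriv u y = deriv (fun _ : ℝ => (0:ℝ)) y :=
            Filter.EventuallyEq.deriv_eq hy.2
          simpa using this
        have := (closure_mono himg) h1
        simpa using this
      exact ⟨hxI, key x hxI hux hux'⟩
    have hIO : I ⊆ O := hIconn.subset_of_closure_inter_subset hOopen hne hclosure
    rcases eq_or_ne R ⊤ with hRtop | hRne
    · have hzero : ∀ᶠ x in atTop, u x = 0 := by
        filter_upwards [eventually_gt_atTop (0:ℝ)] with x hx
        exact ((hIO ⟨hx, hRtop ▸ ENNReal.ofReal_lt_top⟩).2).self_of_nhds
      have hzero' : u =ᶠ[atTop] (fun _ => (0:ℝ)) := hzero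
      have : sp = 0 :=
        tendsto_nhds_unique (hlimtop hRtop) (Filter.Tendsto.congr' hzero'.symm tendsto_const_nhds)
      linarith
    · set R' := R.toReal with hR'def
      have hR'0 : 0 < R' := ENNReal.toReal_pos hR.ne' hRne
      have hRR' : R = ENNReal.ofReal R' := (ENNReal.ofReal_toReal hRne).symm
      have hzero : ∀ᶠ x in 𝓝[<] R', u x = 0 := by
        filter_upwards [self_mem_nhdsWithin,
          eventually_nhdsWithin_of_eventually_nhds (eventually_gt_nhds hR'0)] with x hx hx0
        have hxR : ENNReal.ofReal x < R := by
          rw [hRR']; exact (ENNReal.ofReal_lt_ofReal_iff hR'0).mpr hx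
        exact ((hIO ⟨hx0, hxR⟩).2).self_of_nhds
      have hzero' : u =ᶠ[𝓝[<] R'] (fun _ => (0:ℝ)) := hzero
      have : sp = 0 :=
        tendsto_nhds_unique (hlim R' hR'0 hRR')
          (Filter.Tendsto.congr' hzero'.symm tendsto_const_nhds)
      linarith
  exact fun r hr hrR => ⟨lower r hr hrR, upper r hr hrR⟩
end

section
/- Suppose ū is a super-solution of (⋆) on (0,∞) with 0 ≤ ū ≤ s_+ and ū(r) = ᾱ·r^{γ_+} + o(r^{γ_+}) as r → 0 for some ᾱ > 0; then ū(r) > 0 for all r ∈ (0,∞). Suppose u̲ is a sub-solution of (⋆) on (0,∞) with 0 ≤ u̲ ≤ s_+ and u̲(r) = s_+ − β̲·r^{−2} + o(r^{−2}) as r → ∞ for some β̲ > 0; then u̲(r) < s_+ for all r ∈ (0,∞). -/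
open Set Filter Topology MeasureTheory
open scoped ENNReal NNReal

/-- `ψ` is locally Lipschitz on the set `I`. -/
def LocLipOn (I : Set ℝ) (ψ : ℝ → ℝ) : Prop :=
  ∀ x ∈ I, ∃ K : ℝ≥0, ∃ t ∈ nhdsWithin x I, LipschitzOnWith K ψ t

/-- `ψ` is a locally Lipschitz, piecewise `C²` super-solution of (⋆) on `I`:
outside a locally finite set `S` of jump points it is `C²` and satisfies
`ψ'' + (p/r)ψ' - (q/r²)ψ ≤ F(ψ)`, and at each jump point the one-sided
derivatives exist with `ψ'(r₀⁻) > ψ'(r₀⁺)`. -/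
def IsSuperSolutionOn (p q : ℝ) (F : ℝ → ℝ) (I : Set ℝ) (ψ : ℝ → ℝ) : Prop :=
  LocLipOn I ψ ∧
    ∃ S : Set ℝ,
      (∀ x ∈ I, ∃ ε > 0, (S ∩ Set.Ioo (x - ε) (x + ε)).Finite) ∧
      (∀ x ∈ I \ S, ContDiffAt ℝ 2 ψ x ∧
        deriv (deriv ψ) x + (p / x) * deriv ψ x - (q / x ^ 2) * ψ x ≤ F (ψ x)) ∧
      (∀ x ∈ I ∩ S, ∃ dl dr : ℝ, HasDerivWithinAt ψ dl (Set.Iio x) x ∧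
        HasDerivWithinAt ψ dr (Set.Ioi x) x ∧ dr < dl)

/-- `ψ` is a locally Lipschitz, piecewise `C²` sub-solution of (⋆) on `I`. -/
def IsSubSolutionOn (p q : ℝ) (F : ℝ → ℝ) (I : Set ℝ) (ψ : ℝ → ℝ) : Prop :=
  LocLipOn I ψ ∧
    ∃ S : Set ℝ,
      (∀ x ∈ I, ∃ ε > 0, (S ∩ Set.Ioo (x - ε) (x + ε)).Finite) ∧
      (∀ x ∈ I \ S, ContDiffAt ℝ 2 ψ x ∧
        F (ψ x) ≤ deriv (deriv ψ) x + (p / x) * deriv ψ x - (q / x ^ 2) * ψ x) ∧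
      (∀ x ∈ I ∩ S, ∃ dl dr : ℝ, HasDerivWithinAt ψ dl (Set.Iio x) x ∧
        HasDerivWithinAt ψ dr (Set.Ioi x) x ∧ dl < dr)

/-- `u(r) = α·r^γ + o(r^γ)` as `r → 0⁺`. -/
def AsympZero (u : ℝ → ℝ) (α γ : ℝ) : Prop :=
  Filter.Tendsto (fun r : ℝ => (u r - α * r ^ γ) / r ^ γ) (nhdsWithin 0 (Set.Ioi 0)) (nhds 0)

/-- `u(r) = sp - β·r⁻² + o(r⁻²)` as `r → ∞`. -/
def AsympInfty (u : ℝ → ℝ) (sp β : ℝ) : Prop :=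
  Filter.Tendsto (fun r : ℝ => (u r - (sp - β / r ^ 2)) * r ^ 2) Filter.atTop (nhds 0)


lemma contDiffAt_two_diff_deriv {f : ℝ → ℝ} {x : ℝ} (h : ContDiffAt ℝ 2 f x) :
    DifferentiableAt ℝ (deriv f) x := by
  have h1 : ContDiffAt ℝ 1 (fderiv ℝ f) x := h.fderiv_right (by norm_num)
  have h2 : ContDiffAt ℝ 1 (fun y => fderiv ℝ f y (1:ℝ)) x := h1.clm_apply contDiffAt_const
  have h3 := h2.differentiableAt one_ne_zero
  have he : (fun y => fderiv ℝ f y (1:ℝ)) = deriv f := funext fun y => fderiv_apply_one_eq_deriv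
  rwa [he] at h3

lemma left_deriv_le {f g : ℝ → ℝ} {c df dg : ℝ}
    (hf : HasDerivWithinAt f df (Iio c) c) (hg : HasDerivWithinAt g dg (Iio c) c)
    (h : ∀ᶠ x in 𝓝[<] c, g x - g c ≤ f x - f c) : df ≤ dg := by
  rw [hasDerivWithinAt_iff_tendsto_slope, Set.diff_singleton_eq_self (by simp)] at hf hg
  refine le_of_tendsto_of_tendsto hf hg ?_
  filter_upwards [h, self_mem_nhdsWithin] with x hx hx'
  have hxc : x - c < 0 := sub_neg.2 hx'
  rw [slope_def_field, slope_def_field]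
  rw [div_le_div_right_of_neg hxc]
  exact hx

lemma right_deriv_le {f g : ℝ → ℝ} {c df dg : ℝ}
    (hf : HasDerivWithinAt f df (Ioi c) c) (hg : HasDerivWithinAt g dg (Ioi c) c)
    (h : ∀ᶠ x in 𝓝[>] c, g x - g c ≤ f x - f c) : dg ≤ df := by
  rw [hasDerivWithinAt_iff_tendsto_slope, Set.diff_singleton_eq_self (by simp)] at hf hg
  refine le_of_tendsto_of_tendsto hg hf ?_
  filter_upwards [h, self_mem_nhdsWithin] with x hx hx'
  have hxc : 0 < x - c := sub_pos.2 hx'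
  rw [slope_def_field, slope_def_field]
  rw [div_le_div_iff_of_pos_right hxc]
  exact hx

lemma left_deriv_nonpos {f : ℝ → ℝ} {c df : ℝ}
    (hf : HasDerivWithinAt f df (Iio c) c) (h : ∀ᶠ x in 𝓝[<] c, f c ≤ f x) : df ≤ 0 :=
  left_deriv_le hf (hasDerivWithinAt_const c _ (f c)) (by
    filter_upwards [h] with x hx; simp; linarith)

lemma right_deriv_nonneg {f : ℝ → ℝ} {c df : ℝ}
    (hf : HasDerivWithinAt f df (Ioi c) c) (h : ∀ᶠ x in 𝓝[>] c, f c ≤ f x) : 0 ≤ df :=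
  right_deriv_le hf (hasDerivWithinAt_const c _ (f c)) (by
    filter_upwards [h] with x hx; simp; linarith)

lemma corner_no_local_min {ψ v : ℝ → ℝ} {c dl dr dv : ℝ}
    (hl : HasDerivWithinAt ψ dl (Iio c) c) (hr : HasDerivWithinAt ψ dr (Ioi c) c)
    (hlt : dr < dl) (hv : HasDerivAt v dv c)
    (hmin : IsLocalMin (fun x => ψ x - v x) c) : False := by
  have hwl : HasDerivWithinAt (fun x => ψ x - v x) (dl - dv) (Iio c) c :=
    hl.sub hv.hasDerivWithinAt
  have hwr : HasDerivWithinAt (fun x => ψ x - v x) (dr - dv) (Ioi c) c :=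
    hr.sub hv.hasDerivWithinAt
  have h1 : dl - dv ≤ 0 := left_deriv_nonpos hwl (hmin.filter_mono nhdsWithin_le_nhds)
  have h2 : 0 ≤ dr - dv := right_deriv_nonneg hwr (hmin.filter_mono nhdsWithin_le_nhds)
  linarith

lemma second_deriv_test_min {f : ℝ → ℝ} {c : ℝ} (hf : ContDiffAt ℝ 2 f c)
    (hmin : IsLocalMin f c) : 0 ≤ deriv (deriv f) c := by
  by_contra hcon
  push_neg at hcon
  have hg : DifferentiableAt ℝ (deriv f) c := contDiffAt_two_diff_deriv hf
  have hgc : deriv f c = 0 := hmin.deriv_eq_zero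
  have hslope : Tendsto (slope (deriv f) c) (𝓝[≠] c) (𝓝 (deriv (deriv f) c)) := by
    have h := hg.hasDerivAt
    rwa [hasDerivAt_iff_tendsto_slope] at h
  have h1 : ∀ᶠ x in 𝓝[>] c, deriv f x < 0 := by
    have h2 : ∀ᶠ x in 𝓝[≠] c, slope (deriv f) c x < 0 := hslope.eventually_lt_const hcon
    have h3 : 𝓝[>] c ≤ 𝓝[≠] c := nhdsWithin_mono c (fun x hx => ne_of_gt hx)
    filter_upwards [h3 h2, self_mem_nhdsWithin] with x hx hx'
    have hxc : 0 < x - c := sub_pos.2 hx'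
    rw [slope_def_field, hgc, sub_zero] at hx
    by_contra hge
    push_neg at hge
    exact absurd (div_nonneg hge hxc.le) (not_le.2 hx)
  obtain ⟨u, hu, hcd⟩ := hf.contDiffOn le_rfl (by simp)
  obtain ⟨t, hts, hto, hct⟩ := mem_nhds_iff.mp hu
  obtain ⟨d, hd, hIoo⟩ := mem_nhdsGT_iff_exists_Ioo_subset.mp h1
  have hminev : {x | f c ≤ f x} ∈ 𝓝 c := hmin
  obtain ⟨ε, hε, hball⟩ := Metric.mem_nhds_iff.mp (inter_mem (hto.mem_nhds hct) hminev)
  set d' := min d (c + ε / 2) with hd'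
  have hcd' : c < d' := lt_min hd (by linarith)
  have hsub : Icc c d' ⊆ Metric.ball c ε := by
    intro x hx
    have h5 : x ≤ c + ε / 2 := le_trans hx.2 (min_le_right _ _)
    rw [Metric.mem_ball, Real.dist_eq, abs_sub_lt_iff]
    constructor <;> [skip; skip] <;> linarith [hx.1, hx.2]
  have hsubt : Icc c d' ⊆ t := fun x hx => (hball (hsub hx)).1
  have hcont : ContinuousOn f (Icc c d') := ((hcd.mono hts).continuousOn).mono hsubt
  have hanti : StrictAntiOn f (Icc c d') := by
    refine strictAntiOn_of_deriv_neg (convex_Icc _ _) hcont ?_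
    intro x hx
    rw [interior_Icc] at hx
    exact hIoo ⟨hx.1, lt_of_lt_of_le hx.2 (min_le_left _ _)⟩
  have h6 : f d' < f c := hanti (left_mem_Icc.2 hcd'.le) (right_mem_Icc.2 hcd'.le) hcd'
  have h7 : f c ≤ f d' := (hball (hsub (right_mem_Icc.2 hcd'.le))).2
  linarith

lemma smooth_no_local_min {p q K : ℝ} (hq : 0 < q) (hK : 0 ≤ K) {ψ v : ℝ → ℝ} {c : ℝ}
    (hc : 0 < c) (hψ : ContDiffAt ℝ 2 ψ c)
    (hineq : deriv (deriv ψ) c + (p / c) * deriv ψ c - (q / c ^ 2 + K) * ψ c ≤ 0)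
    (hvC2 : ContDiff ℝ 2 v)
    (hbar : 0 < deriv (deriv v) c + (p / c) * deriv v c - (q / c ^ 2 + K) * v c)
    (hmin : IsLocalMin (fun x => ψ x - v x) c) (hneg : ψ c - v c < 0) : False := by
  set w : ℝ → ℝ := fun x => ψ x - v x with hw
  have hψd : DifferentiableAt ℝ ψ c := hψ.differentiableAt two_ne_zero
  have hvd : DifferentiableAt ℝ v c := (hvC2.differentiable two_ne_zero) c
  have hwC2 : ContDiffAt ℝ 2 w c := hψ.sub hvC2.contDiffAt
  have h2nd : 0 ≤ deriv (deriv w) c := second_deriv_test_min hwC2 hmin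
  have hw0 : deriv w c = 0 := hmin.deriv_eq_zero
  have hdw1 : deriv w c = deriv ψ c - deriv v c := deriv_sub hψd hvd
  -- eventually deriv w = deriv ψ - deriv v
  obtain ⟨u, hu, hcd⟩ := hψ.contDiffOn le_rfl (by simp)
  obtain ⟨t, hts, hto, hct⟩ := mem_nhds_iff.mp hu
  have hev : ∀ᶠ x in 𝓝 c, deriv w x = deriv ψ x - deriv v x := by
    filter_upwards [hto.mem_nhds hct] with x hx
    have hdx : DifferentiableAt ℝ ψ x :=
      (((hcd.mono hts).differentiableOn two_ne_zero).differentiableAt (hto.mem_nhds hx))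
    exact deriv_sub hdx ((hvC2.differentiable two_ne_zero) x)
  have hdd : deriv (deriv w) c = deriv (deriv ψ) c - deriv (deriv v) c := by
    rw [Filter.EventuallyEq.deriv_eq hev]
    exact deriv_sub (contDiffAt_two_diff_deriv hψ) (contDiffAt_two_diff_deriv hvC2.contDiffAt)
  have hqc : 0 < q / c ^ 2 + K := by positivity
  have hprod : (q / c ^ 2 + K) * (ψ c - v c) < 0 := mul_neg_of_pos_of_neg hqc hneg
  have hBB : deriv ψ c = deriv v c := by rw [hdw1] at hw0; linarith
  rw [hBB] at hineq
  have hexp : (q / c ^ 2 + K) * ψ c - (q / c ^ 2 + K) * v c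
      = (q / c ^ 2 + K) * (ψ c - v c) := by ring
  rw [hdd] at h2nd
  linarith

lemma barrier_left {p q K : ℝ} (hp : 0 ≤ p) (hq : 0 < q) (hK : 0 ≤ K)
    {ψ : ℝ → ℝ} {S : Set ℝ}
    (hsm : ∀ x ∈ Ioi (0:ℝ) \ S, ContDiffAt ℝ 2 ψ x ∧
      deriv (deriv ψ) x + (p / x) * deriv ψ x - (q / x ^ 2 + K) * ψ x ≤ 0)
    (hcr : ∀ x ∈ Ioi (0:ℝ) ∩ S, ∃ dl dr : ℝ, HasDerivWithinAt ψ dl (Iio x) x ∧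
      HasDerivWithinAt ψ dr (Ioi x) x ∧ dr < dl)
    (hcont : ∀ x ∈ Ioi (0:ℝ), ContinuousAt ψ x)
    (hnn : ∀ x ∈ Ioi (0:ℝ), 0 ≤ ψ x)
    {r₀ a : ℝ} (ha0 : 0 < a) (har : a < r₀) (hψr₀ : ψ r₀ = 0) (hψa : 0 < ψ a) : False := by
  have hr₀ : 0 < r₀ := ha0.trans har
  have hIoimem : Ioi (0:ℝ) ∈ 𝓝 r₀ := Ioi_mem_nhds hr₀
  have hminr₀ : IsLocalMin ψ r₀ := by
    filter_upwards [hIoimem] with x hx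
    rw [hψr₀]; exact hnn x hx
  by_cases hr₀S : r₀ ∈ S
  · obtain ⟨dl, dr, hdl, hdr, hlt⟩ := hcr r₀ ⟨hr₀, hr₀S⟩
    have h1 : dl ≤ 0 := left_deriv_nonpos hdl (hminr₀.filter_mono nhdsWithin_le_nhds)
    have h2 : 0 ≤ dr := right_deriv_nonneg hdr (hminr₀.filter_mono nhdsWithin_le_nhds)
    linarith
  · obtain ⟨hC2, -⟩ := hsm r₀ ⟨hr₀, hr₀S⟩
    obtain ⟨α, hα⟩ : ∃ α : ℝ, α = p / a + q / a ^ 2 + K + 1 := ⟨_, rfl⟩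
    have hpa : 0 ≤ p / a := div_nonneg hp ha0.le
    have hqa : 0 ≤ q / a ^ 2 := div_nonneg hq.le (by positivity)
    have hα1 : 1 ≤ α := by rw [hα]; linarith
    have hα0 : 0 < α := by linarith
    set E : ℝ → ℝ := fun r => Real.exp (α * (r₀ - r)) with hE
    have hEpos : ∀ r, 0 < E r := fun r => Real.exp_pos _
    have hEr₀ : E r₀ = 1 := by simp [hE]
    have hEa : 1 < E a := by
      rw [hE]; rw [Real.one_lt_exp_iff]; nlinarith
    obtain ⟨ε, hε⟩ : ∃ ε : ℝ, ε = ψ a / (2 * (E a - 1)) := ⟨_, rfl⟩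
    have hε0 : 0 < ε := by rw [hε]; exact div_pos hψa (by linarith)
    set v : ℝ → ℝ := fun r => ε * (E r - 1) with hv
    have hlin : ∀ r : ℝ, HasDerivAt (fun x : ℝ => α * (r₀ - x)) (-α) r := by
      intro r
      simpa using ((hasDerivAt_id r).const_sub r₀).const_mul α
    have hEd : ∀ r, HasDerivAt E (E r * (-α)) r := fun r => (hlin r).exp
    have hvd : ∀ r, HasDerivAt v (-(ε * α) * E r) r := by
      intro r
      have h3 : HasDerivAt v (ε * (E r * (-α))) r := ((hEd r).sub_const 1).const_mul ε
      convert h3 using 1; ring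
    have hvd' : deriv v = fun r => -(ε * α) * E r := funext fun r => (hvd r).deriv
    have hv2 : ∀ r, HasDerivAt (deriv v) (ε * α ^ 2 * E r) r := by
      intro r
      rw [hvd']
      have h3 : HasDerivAt (fun x => -(ε * α) * E x) (-(ε * α) * (E r * (-α))) r :=
        (hEd r).const_mul (-(ε * α))
      convert h3 using 1; ring
    have hv2' : deriv (deriv v) = fun r => ε * α ^ 2 * E r := funext fun r => (hv2 r).deriv
    have hvC2 : ContDiff ℝ 2 v := by
      have h3 : ContDiff ℝ 2 (fun r : ℝ => α * (r₀ - r)) :=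
        contDiff_const.mul (contDiff_const.sub contDiff_id)
      exact contDiff_const.mul ((Real.contDiff_exp.comp h3).sub contDiff_const)
    have hvr₀ : v r₀ = 0 := by simp [hv, hEr₀]
    have hEane : E a - 1 ≠ 0 := by linarith
    have hva : v a = ψ a / 2 := by
      rw [hv, hε]; field_simp
    have h5 : 1 ≤ α ^ 2 - (p / a) * α - (q / a ^ 2 + K) := by
      have he : α ^ 2 - (p / a) * α - (q / a ^ 2 + K)
          = (q / a ^ 2) * (α - 1) + K * (α - 1) + α := by rw [hα]; ring
      have h1 : 0 ≤ (q / a ^ 2) * (α - 1) := mul_nonneg hqa (by linarith)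
      have h2 : 0 ≤ K * (α - 1) := mul_nonneg hK (by linarith)
      linarith
    -- barrier inequality
    have hbar : ∀ r ∈ Icc a r₀, 0 < deriv (deriv v) r + (p / r) * deriv v r
        - (q / r ^ 2 + K) * v r := by
      intro r hr
      have hra : a ≤ r := hr.1
      have hr0 : 0 < r := ha0.trans_le hra
      rw [hv2', hvd', hv]
      beta_reduce
      have hA1 : 1 ≤ E r := by
        rw [hE]; apply Real.one_le_exp; nlinarith [hr.2]
      have hApos : 0 < E r := hEpos r
      have e1 : p / r ≤ p / a := by
        rcases eq_or_lt_of_le hp with h | h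
        · rw [← h]; simp
        · exact div_le_div_of_nonneg_left h.le ha0 hra
      have e2 : q / r ^ 2 ≤ q / a ^ 2 :=
        div_le_div_of_nonneg_left hq.le (by positivity) (pow_le_pow_left₀ ha0.le hra 2)
      have epr : 0 ≤ p / r := div_nonneg hp hr0.le
      have eqr : 0 ≤ q / r ^ 2 := div_nonneg hq.le (by positivity)
      have c1 : (p / r) * (-(ε * α) * E r) = -((p / r) * (ε * α * E r)) := by ring
      have c2 : (p / r) * (ε * α * E r) ≤ (p / a) * (ε * α * E r) :=
        mul_le_mul_of_nonneg_right e1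
          (mul_nonneg (mul_nonneg hε0.le hα0.le) hApos.le)
      have c3 : (q / r ^ 2 + K) * (ε * (E r - 1)) = ε * ((q / r ^ 2 + K) * (E r - 1)) := by
        ring
      have c4 : (q / r ^ 2 + K) * (E r - 1) ≤ (q / a ^ 2 + K) * E r :=
        mul_le_mul (by linarith) (by linarith) (by linarith) (by linarith)
      have c5 : ε * ((q / r ^ 2 + K) * (E r - 1)) ≤ ε * ((q / a ^ 2 + K) * E r) :=
        mul_le_mul_of_nonneg_left c4 hε0.le
      have c6 : ε * α ^ 2 * E r - (p / a) * (ε * α * E r) - ε * ((q / a ^ 2 + K) * E r)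
          = (ε * E r) * (α ^ 2 - (p / a) * α - (q / a ^ 2 + K)) := by ring
      have c8 : 0 < ε * E r := mul_pos hε0 hApos
      have c7 : (ε * E r) * 1 ≤ (ε * E r) * (α ^ 2 - (p / a) * α - (q / a ^ 2 + K)) :=
        mul_le_mul_of_nonneg_left h5 c8.le
      have c9 : (ε * E r) * 1 = ε * E r := mul_one _
      linarith
    -- minimum of w on Icc a r₀
    set w : ℝ → ℝ := fun r => ψ r - v r with hw
    have hvC : Continuous v := hvC2.continuous
    have hwcont : ContinuousOn w (Icc a r₀) := by
      intro x hx
      have hx0 : (0:ℝ) < x := ha0.trans_le hx.1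
      exact ((hcont x hx0).continuousWithinAt).sub (hvC.continuousAt.continuousWithinAt)
    obtain ⟨c, hcmem, hcmin⟩ :=
      isCompact_Icc.exists_isMinOn (nonempty_Icc.mpr har.le) hwcont
    by_cases hneg : w c < 0
    · have hwa : w a = ψ a / 2 := by simp only [hw]; rw [hva]; ring
      have hwr₀ : w r₀ = 0 := by simp [hw, hψr₀, hvr₀]
      have hca : c ≠ a := fun h => by rw [h, hwa] at hneg; linarith
      have hcr₀ : c ≠ r₀ := fun h => by rw [h, hwr₀] at hneg; linarith
      have hcoo : c ∈ Ioo a r₀ :=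
        ⟨lt_of_le_of_ne hcmem.1 (Ne.symm hca), lt_of_le_of_ne hcmem.2 hcr₀⟩
      have hc0 : 0 < c := ha0.trans hcoo.1
      have hlmin : IsLocalMin w c := hcmin.isLocalMin (Icc_mem_nhds hcoo.1 hcoo.2)
      by_cases hcS : c ∈ S
      · obtain ⟨dl, dr, h1, h2, h3⟩ := hcr c ⟨hc0, hcS⟩
        exact corner_no_local_min h1 h2 h3 (hvd c) hlmin
      · obtain ⟨hC2c, hineq⟩ := hsm c ⟨hc0, hcS⟩
        exact smooth_no_local_min hq hK hc0 hC2c hineq hvC2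
          (hbar c (Ioo_subset_Icc_self hcoo)) hlmin hneg
    · push_neg at hneg
      have hge : ∀ x ∈ Icc a r₀, v x ≤ ψ x := by
        intro x hx
        have h9 := hcmin hx
        simp only [hw, Set.mem_setOf_eq] at h9 hneg
        linarith
      have hdψ : HasDerivAt ψ (deriv ψ r₀) r₀ := (hC2.differentiableAt two_ne_zero).hasDerivAt
      have h1 : 0 ≤ deriv ψ r₀ := by
        apply right_deriv_nonneg hdψ.hasDerivWithinAt
        filter_upwards [mem_nhdsWithin_of_mem_nhds hIoimem] with x hx
        rw [hψr₀]; exact hnn x hx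
      have h2 : deriv ψ r₀ ≤ -(ε * α) * E r₀ := by
        apply left_deriv_le hdψ.hasDerivWithinAt (hvd r₀).hasDerivWithinAt
        have hIa : Ioi a ∈ 𝓝 r₀ := Ioi_mem_nhds har
        filter_upwards [mem_nhdsWithin_of_mem_nhds hIa, self_mem_nhdsWithin] with x hx hx'
        have hxm : x ∈ Icc a r₀ := ⟨le_of_lt hx, le_of_lt hx'⟩
        have h9 := hge x hxm
        rw [hψr₀, hvr₀]; linarith
      rw [hEr₀] at h2
      have h3 : 0 < ε * α := mul_pos hε0 hα0
      linarith

lemma barrier_right {p q K : ℝ} (hp : 0 ≤ p) (hq : 0 < q) (hK : 0 ≤ K)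
    {ψ : ℝ → ℝ} {S : Set ℝ}
    (hsm : ∀ x ∈ Ioi (0:ℝ) \ S, ContDiffAt ℝ 2 ψ x ∧
      deriv (deriv ψ) x + (p / x) * deriv ψ x - (q / x ^ 2 + K) * ψ x ≤ 0)
    (hcr : ∀ x ∈ Ioi (0:ℝ) ∩ S, ∃ dl dr : ℝ, HasDerivWithinAt ψ dl (Iio x) x ∧
      HasDerivWithinAt ψ dr (Ioi x) x ∧ dr < dl)
    (hcont : ∀ x ∈ Ioi (0:ℝ), ContinuousAt ψ x)
    (hnn : ∀ x ∈ Ioi (0:ℝ), 0 ≤ ψ x)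
    {r₀ b : ℝ} (hr₀ : 0 < r₀) (hrb : r₀ < b) (hψr₀ : ψ r₀ = 0) (hψb : 0 < ψ b) : False := by
  have hIoimem : Ioi (0:ℝ) ∈ 𝓝 r₀ := Ioi_mem_nhds hr₀
  have hminr₀ : IsLocalMin ψ r₀ := by
    filter_upwards [hIoimem] with x hx
    rw [hψr₀]; exact hnn x hx
  by_cases hr₀S : r₀ ∈ S
  · obtain ⟨dl, dr, hdl, hdr, hlt⟩ := hcr r₀ ⟨hr₀, hr₀S⟩
    have h1 : dl ≤ 0 := left_deriv_nonpos hdl (hminr₀.filter_mono nhdsWithin_le_nhds)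
    have h2 : 0 ≤ dr := right_deriv_nonneg hdr (hminr₀.filter_mono nhdsWithin_le_nhds)
    linarith
  · obtain ⟨hC2, -⟩ := hsm r₀ ⟨hr₀, hr₀S⟩
    obtain ⟨α, hα⟩ : ∃ α : ℝ, α = q / r₀ ^ 2 + K + 1 := ⟨_, rfl⟩
    have hqa : 0 ≤ q / r₀ ^ 2 := div_nonneg hq.le (by positivity)
    have hα1 : 1 ≤ α := by rw [hα]; linarith
    have hα0 : 0 < α := by linarith
    set E : ℝ → ℝ := fun r => Real.exp (α * (r - r₀)) with hE
    have hEpos : ∀ r, 0 < E r := fun r => Real.exp_pos _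
    have hEr₀ : E r₀ = 1 := by simp [hE]
    have hEb : 1 < E b := by
      rw [hE]; rw [Real.one_lt_exp_iff]; nlinarith
    obtain ⟨ε, hε⟩ : ∃ ε : ℝ, ε = ψ b / (2 * (E b - 1)) := ⟨_, rfl⟩
    have hε0 : 0 < ε := by rw [hε]; exact div_pos hψb (by linarith)
    set v : ℝ → ℝ := fun r => ε * (E r - 1) with hv
    have hlin : ∀ r : ℝ, HasDerivAt (fun x : ℝ => α * (x - r₀)) α r := by
      intro r
      simpa using ((hasDerivAt_id r).sub_const r₀).const_mul α
    have hEd : ∀ r, HasDerivAt E (E r * α) r := fun r => (hlin r).exp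
    have hvd : ∀ r, HasDerivAt v ((ε * α) * E r) r := by
      intro r
      have h3 : HasDerivAt v (ε * (E r * α)) r := ((hEd r).sub_const 1).const_mul ε
      convert h3 using 1; ring
    have hvd' : deriv v = fun r => (ε * α) * E r := funext fun r => (hvd r).deriv
    have hv2 : ∀ r, HasDerivAt (deriv v) (ε * α ^ 2 * E r) r := by
      intro r
      rw [hvd']
      have h3 : HasDerivAt (fun x => (ε * α) * E x) ((ε * α) * (E r * α)) r :=
        (hEd r).const_mul (ε * α)
      convert h3 using 1; ring
    have hv2' : deriv (deriv v) = fun r => ε * α ^ 2 * E r := funext fun r => (hv2 r).deriv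
    have hvC2 : ContDiff ℝ 2 v := by
      have h3 : ContDiff ℝ 2 (fun r : ℝ => α * (r - r₀)) :=
        contDiff_const.mul (contDiff_id.sub contDiff_const)
      exact contDiff_const.mul ((Real.contDiff_exp.comp h3).sub contDiff_const)
    have hvr₀ : v r₀ = 0 := by simp [hv, hEr₀]
    have hEbne : E b - 1 ≠ 0 := by linarith
    have hvb : v b = ψ b / 2 := by
      rw [hv, hε]; field_simp
    have h5 : 1 ≤ α ^ 2 - (q / r₀ ^ 2 + K) := by
      have he : α ^ 2 - (q / r₀ ^ 2 + K)
          = (q / r₀ ^ 2) * (α - 1) + K * (α - 1) + α := by rw [hα]; ring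
      have h1 : 0 ≤ (q / r₀ ^ 2) * (α - 1) := mul_nonneg hqa (by linarith)
      have h2 : 0 ≤ K * (α - 1) := mul_nonneg hK (by linarith)
      linarith
    -- barrier inequality
    have hbar : ∀ r ∈ Icc r₀ b, 0 < deriv (deriv v) r + (p / r) * deriv v r
        - (q / r ^ 2 + K) * v r := by
      intro r hr
      have hra : r₀ ≤ r := hr.1
      have hr0 : 0 < r := hr₀.trans_le hra
      rw [hv2', hvd', hv]
      beta_reduce
      have hA1 : 1 ≤ E r := by
        rw [hE]; apply Real.one_le_exp; nlinarith [hr.1]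
      have hApos : 0 < E r := hEpos r
      have e2 : q / r ^ 2 ≤ q / r₀ ^ 2 :=
        div_le_div_of_nonneg_left hq.le (by positivity) (pow_le_pow_left₀ hr₀.le hra 2)
      have epr : 0 ≤ p / r := div_nonneg hp hr0.le
      have eqr : 0 ≤ q / r ^ 2 := div_nonneg hq.le (by positivity)
      have c2 : 0 ≤ (p / r) * (ε * α * E r) :=
        mul_nonneg epr (mul_nonneg (mul_nonneg hε0.le hα0.le) hApos.le)
      have c3 : (q / r ^ 2 + K) * (ε * (E r - 1)) = ε * ((q / r ^ 2 + K) * (E r - 1)) := by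
        ring
      have c4 : (q / r ^ 2 + K) * (E r - 1) ≤ (q / r₀ ^ 2 + K) * E r :=
        mul_le_mul (by linarith) (by linarith) (by linarith) (by linarith)
      have c5 : ε * ((q / r ^ 2 + K) * (E r - 1)) ≤ ε * ((q / r₀ ^ 2 + K) * E r) :=
        mul_le_mul_of_nonneg_left c4 hε0.le
      have c6 : ε * α ^ 2 * E r - ε * ((q / r₀ ^ 2 + K) * E r)
          = (ε * E r) * (α ^ 2 - (q / r₀ ^ 2 + K)) := by ring
      have c8 : 0 < ε * E r := mul_pos hε0 hApos
      have c7 : (ε * E r) * 1 ≤ (ε * E r) * (α ^ 2 - (q / r₀ ^ 2 + K)) :=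
        mul_le_mul_of_nonneg_left h5 c8.le
      have c9 : (ε * E r) * 1 = ε * E r := mul_one _
      linarith
    -- minimum of w on Icc r₀ b
    set w : ℝ → ℝ := fun r => ψ r - v r with hw
    have hvC : Continuous v := hvC2.continuous
    have hwcont : ContinuousOn w (Icc r₀ b) := by
      intro x hx
      have hx0 : (0:ℝ) < x := hr₀.trans_le hx.1
      exact ((hcont x hx0).continuousWithinAt).sub (hvC.continuousAt.continuousWithinAt)
    obtain ⟨c, hcmem, hcmin⟩ :=
      isCompact_Icc.exists_isMinOn (nonempty_Icc.mpr hrb.le) hwcont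
    by_cases hneg : w c < 0
    · have hwb : w b = ψ b / 2 := by simp only [hw]; rw [hvb]; ring
      have hwr₀ : w r₀ = 0 := by simp [hw, hψr₀, hvr₀]
      have hcb : c ≠ b := fun h => by rw [h, hwb] at hneg; linarith
      have hcr₀ : c ≠ r₀ := fun h => by rw [h, hwr₀] at hneg; linarith
      have hcoo : c ∈ Ioo r₀ b :=
        ⟨lt_of_le_of_ne hcmem.1 (Ne.symm hcr₀), lt_of_le_of_ne hcmem.2 hcb⟩
      have hc0 : 0 < c := hr₀.trans hcoo.1
      have hlmin : IsLocalMin w c := hcmin.isLocalMin (Icc_mem_nhds hcoo.1 hcoo.2)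
      by_cases hcS : c ∈ S
      · obtain ⟨dl, dr, h1, h2, h3⟩ := hcr c ⟨hc0, hcS⟩
        exact corner_no_local_min h1 h2 h3 (hvd c) hlmin
      · obtain ⟨hC2c, hineq⟩ := hsm c ⟨hc0, hcS⟩
        exact smooth_no_local_min hq hK hc0 hC2c hineq hvC2
          (hbar c (Ioo_subset_Icc_self hcoo)) hlmin hneg
    · push_neg at hneg
      have hge : ∀ x ∈ Icc r₀ b, v x ≤ ψ x := by
        intro x hx
        have h9 := hcmin hx
        simp only [hw, Set.mem_setOf_eq] at h9 hneg
        linarith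
      have hdψ : HasDerivAt ψ (deriv ψ r₀) r₀ := (hC2.differentiableAt two_ne_zero).hasDerivAt
      have h1 : deriv ψ r₀ ≤ 0 := by
        apply left_deriv_nonpos hdψ.hasDerivWithinAt
        filter_upwards [mem_nhdsWithin_of_mem_nhds hIoimem] with x hx
        rw [hψr₀]; exact hnn x hx
      have h2 : (ε * α) * E r₀ ≤ deriv ψ r₀ := by
        apply right_deriv_le hdψ.hasDerivWithinAt (hvd r₀).hasDerivWithinAt
        have hIb : Iio b ∈ 𝓝 r₀ := Iio_mem_nhds hrb
        filter_upwards [mem_nhdsWithin_of_mem_nhds hIb, self_mem_nhdsWithin] with x hx hx'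
        have hxm : x ∈ Icc r₀ b := ⟨le_of_lt hx', le_of_lt hx⟩
        have h9 := hge x hxm
        rw [hψr₀, hvr₀]; linarith
      rw [hEr₀] at h2
      have h3 : 0 < ε * α := mul_pos hε0 hα0
      linarith


lemma locLipOn_continuousAt {ψ : ℝ → ℝ} (h : LocLipOn (Ioi 0) ψ) :
    ∀ x ∈ Ioi (0:ℝ), ContinuousAt ψ x := by
  intro x hx
  obtain ⟨Kl, t, ht, hlip⟩ := h x hx
  have hxt : x ∈ t := by
    obtain ⟨u, hu, hxu, hsub⟩ := mem_nhdsWithin.mp ht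
    exact hsub ⟨hxu, hx⟩
  have hcw : ContinuousWithinAt ψ t x := (hlip.continuousOn) x hxt
  exact (hcw.mono_of_mem_nhdsWithin ht).continuousAt (Ioi_mem_nhds hx)

lemma exists_slope_bound {F : ℝ → ℝ} {sp : ℝ} (hFC : ContDiff ℝ 1 F) :
    ∃ K : ℝ, 0 ≤ K ∧ ∀ t, 0 ≤ t → t ≤ sp → F sp - F t ≤ K * (sp - t) := by
  obtain ⟨C, hC⟩ := (isCompact_Icc (a := (0:ℝ)) (b := sp)).exists_bound_of_continuousOn
    ((hFC.continuous_deriv le_rfl).continuousOn)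
  refine ⟨max C 0, le_max_right _ _, ?_⟩
  intro t h0 h1
  rcases eq_or_lt_of_le h1 with h | h
  · rw [h]; simp
  · have hcont : ContinuousOn F (Icc t sp) := (hFC.continuous).continuousOn
    have hderiv : ∀ x ∈ Ioo t sp, HasDerivAt F (deriv F x) x :=
      fun x _ => ((hFC.differentiable one_ne_zero) x).hasDerivAt
    obtain ⟨c, hc, hceq⟩ := exists_hasDerivAt_eq_slope F (deriv F) h hcont hderiv
    have hcmem : c ∈ Icc (0:ℝ) sp := ⟨h0.trans hc.1.le, hc.2.le⟩
    have hb : deriv F c ≤ max C 0 :=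
      le_trans (le_trans (le_abs_self _) (hC c hcmem)) (le_max_left _ _)
    have heq : F sp - F t = deriv F c * (sp - t) := by
      rw [hceq, div_mul_cancel₀ _ (by linarith : sp - t ≠ 0)]
    rw [heq]
    exact mul_le_mul_of_nonneg_right hb (by linarith)

/-- a super-solution with the stated behaviour at `0` is positive on `(0,∞)`,
and a sub-solution with the stated behaviour at `∞` stays below `s₊` on `(0,∞)`. -/
theorem stmt1 (p q sp : ℝ) (hp : 0 ≤ p) (hq : 0 < q) (hsp : 0 < sp)
    (F : ℝ → ℝ) (hF : CondF F sp) :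
    (∀ (ub : ℝ → ℝ) (αb : ℝ), IsSuperSolutionOn p q F (Set.Ioi 0) ub →
      (∀ r ∈ Set.Ioi (0:ℝ), 0 ≤ ub r ∧ ub r ≤ sp) → 0 < αb →
      AsympZero ub αb (gammaPlus p q) →
      ∀ r ∈ Set.Ioi (0:ℝ), 0 < ub r) ∧
    (∀ (lb : ℝ → ℝ) (βl : ℝ), IsSubSolutionOn p q F (Set.Ioi 0) lb →
      (∀ r ∈ Set.Ioi (0:ℝ), 0 ≤ lb r ∧ lb r ≤ sp) → 0 < βl →
      AsympInfty lb sp βl →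
      ∀ r ∈ Set.Ioi (0:ℝ), lb r < sp) := by
  obtain ⟨hFC, hF0, hFsp, hFneg, hFpos, hF'⟩ := hF
  have hFnonpos : ∀ t : ℝ, 0 ≤ t → t ≤ sp → F t ≤ 0 := by
    intro t h0 h1
    rcases eq_or_lt_of_le h0 with h | h
    · rw [← h, hF0]
    · rcases eq_or_lt_of_le h1 with h' | h'
      · rw [h', hFsp]
      · exact (hFneg t ⟨h, h'⟩).le
  constructor
  · rintro ub αb ⟨hlip, S, hSfin, hsm, hcr⟩ hbnd hαb hasymp r hr
    by_contra hle
    push_neg at hle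
    have hub0 : ub r = 0 := le_antisymm hle (hbnd r hr).1
    have hsmall : ∀ᶠ x in 𝓝[>] (0:ℝ), 0 < ub x := by
      have h2 : ∀ᶠ x in 𝓝[>] (0:ℝ),
          -αb < (ub x - αb * x ^ gammaPlus p q) / x ^ gammaPlus p q :=
        hasymp.eventually_const_lt (by linarith)
      filter_upwards [h2, self_mem_nhdsWithin] with x hx hx'
      have hx0 : (0:ℝ) < x := hx'
      have hxp : 0 < x ^ gammaPlus p q := Real.rpow_pos_of_pos hx0 _
      have hrew : ub x
          = ((ub x - αb * x ^ gammaPlus p q) / x ^ gammaPlus p q + αb) * x ^ gammaPlus p q := by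
        field_simp
        ring
      rw [hrew]
      exact mul_pos (by linarith) hxp
    have h3 : ∀ᶠ x in 𝓝[>] (0:ℝ), x < r :=
      mem_nhdsWithin_of_mem_nhds (Iio_mem_nhds hr)
    obtain ⟨a, ha1, ha2, ha3⟩ := (hsmall.and (h3.and self_mem_nhdsWithin)).exists
    exact barrier_left (K := 0) hp hq le_rfl
      (fun x hx => ⟨(hsm x hx).1, by
        have h4 := (hsm x hx).2
        have h5 := hFnonpos (ub x) (hbnd x hx.1).1 (hbnd x hx.1).2
        simp only [add_zero]
        linarith⟩)
      hcr (locLipOn_continuousAt hlip) (fun x hx => (hbnd x hx).1)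
      (ha3 : (0:ℝ) < a) ha2 hub0 ha1
  · rintro lb βl ⟨hlip, S, hSfin, hsm, hcr⟩ hbnd hβl hasymp r hr
    by_contra hge
    push_neg at hge
    have hlbr : lb r = sp := le_antisymm (hbnd r hr).2 hge
    obtain ⟨K, hK0, hKb⟩ := exists_slope_bound (sp := sp) hFC
    set ψ : ℝ → ℝ := fun x => sp - lb x with hψdef
    have hd1 : deriv ψ = fun y => -deriv lb y := funext fun y => deriv_const_sub sp
    -- find b > r with lb b < sp
    have h4 : ∀ᶠ x : ℝ in atTop, (lb x - (sp - βl / x ^ 2)) * x ^ 2 < βl / 2 :=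
      hasymp.eventually_lt_const (by linarith)
    have h5 : ∀ᶠ x : ℝ in atTop, max r 1 < x := eventually_gt_atTop _
    obtain ⟨b, hb1, hb2⟩ := (h4.and h5).exists
    have hbr : r < b := (le_max_left _ _).trans_lt hb2
    have hb0 : (0:ℝ) < b := lt_of_le_of_lt (by norm_num) ((le_max_right r 1).trans_lt hb2)
    have hbne : b ≠ 0 := hb0.ne'
    have hkey : (lb b - (sp - βl / b ^ 2)) * b ^ 2 = (lb b - sp) * b ^ 2 + βl := by
      field_simp; ring
    have hlbb : lb b < sp := by
      rw [hkey] at hb1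
      nlinarith [sq_nonneg b, pow_pos hb0 2]
    refine barrier_right (K := K) hp hq hK0 (ψ := ψ) (S := S) ?_ ?_ ?_ ?_ hr hbr
      (by simp [hψdef, hlbr]) (by simp only [hψdef]; linarith)
    · intro x hx
      obtain ⟨hC2lb, hineqlb⟩ := hsm x hx
      have hx0 : (0:ℝ) < x := hx.1
      refine ⟨contDiffAt_const.sub hC2lb, ?_⟩
      have hd2 : deriv (deriv ψ) x = -deriv (deriv lb) x := by rw [hd1]; exact deriv.neg
      have hd3 : deriv ψ x = -deriv lb x := by rw [hd1]
      have hFb := hKb (lb x) (hbnd x hx.1).1 (hbnd x hx.1).2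
      rw [hFsp] at hFb
      have hqsp : 0 ≤ (q / x ^ 2) * sp := mul_nonneg (div_nonneg hq.le (by positivity)) hsp.le
      have hexp : (q / x ^ 2 + K) * ψ x
          = (q / x ^ 2) * sp - (q / x ^ 2) * lb x + K * (sp - lb x) := by
        simp only [hψdef]; ring
      rw [hd2, hd3, hexp]
      linarith
    · intro x hx
      obtain ⟨dl, dr, hdl, hdr, hlt⟩ := hcr x hx
      exact ⟨-dl, -dr, hdl.const_sub sp, hdr.const_sub sp, by linarith⟩
    · intro x hx
      exact continuousAt_const.sub (locLipOn_continuousAt hlip x hx)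
    · intro x hx
      simp only [hψdef, sub_nonneg]
      exact (hbnd x hx).2
end

section
/- Let ū be a super-solution and u̲ a sub-solution of (⋆) on (0,∞) such that: 0 ≤ ū, u̲ ≤ s_+ on (0,∞); ū(r) = ᾱ·r^{γ_+} + o(r^{γ_+}) and u̲(r) = α̲·r^{γ_+} + o(r^{γ_+}) as r → 0, with ᾱ > 0; and ū(r) = s_+ − β̄·r^{−2} + o(r^{−2}) and u̲(r) = s_+ − β̲·r^{−2} + o(r^{−2}) as r → ∞, with β̲ > 0. Fix θ ∈ (0,1] and set ū_θ(r) := ū(r/θ). If ū_θ(r) ≥ u̲(r) for all r ∈ (0,∞) and ū_θ(r₀) = u̲(r₀) for some r₀ ∈ (0,∞), then θ = 1 and ū ≡ u̲ on (0,∞). -/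
open Set Filter Topology MeasureTheory
open scoped ENNReal NNReal

lemma c2_package {ψ : ℝ → ℝ} {x : ℝ} (h : ContDiffAt ℝ 2 ψ x) :
    ∃ U : Set ℝ, IsOpen U ∧ x ∈ U ∧
      (∀ y ∈ U, DifferentiableAt ℝ ψ y) ∧
      (∀ y ∈ U, DifferentiableAt ℝ (deriv ψ) y) ∧
      ContinuousOn (deriv ψ) U := by
  obtain ⟨u, hu, hcd⟩ := h.contDiffOn le_rfl (by norm_num)
  have hcd' : ContDiffOn ℝ 2 ψ (interior u) := hcd.mono interior_subset
  rw [show (2 : WithTop ℕ∞) = 1 + 1 by norm_num,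
    contDiffOn_succ_iff_deriv_of_isOpen isOpen_interior] at hcd'
  obtain ⟨hdiff, -, hcd1⟩ := hcd'
  have hcd1' := hcd1
  rw [show (1 : WithTop ℕ∞) = 0 + 1 by norm_num,
    contDiffOn_succ_iff_deriv_of_isOpen isOpen_interior] at hcd1'
  obtain ⟨hdiff1, -, -⟩ := hcd1'
  exact ⟨interior u, isOpen_interior, mem_interior_iff_mem_nhds.2 hu,
    fun y hy => (hdiff y hy).differentiableAt (isOpen_interior.mem_nhds hy),
    fun y hy => (hdiff1 y hy).differentiableAt (isOpen_interior.mem_nhds hy),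
    hcd1.continuousOn⟩

lemma left_deriv_nonpos_s3 {f : ℝ → ℝ} {a d : ℝ} (hd : HasDerivWithinAt f d (Iio a) a)
    (hmin : ∀ᶠ x in 𝓝[<] a, f a ≤ f x) : d ≤ 0 := by
  rw [hasDerivWithinAt_iff_tendsto_slope] at hd
  rw [show Iio a \ {a} = Iio a from diff_singleton_eq_self (by simp)] at hd
  refine le_of_tendsto hd ?_
  filter_upwards [hmin, self_mem_nhdsWithin] with x hx hx'
  rw [slope_def_field]
  exact div_nonpos_of_nonneg_of_nonpos (by linarith) (by simp at hx'; linarith)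

lemma right_deriv_nonneg_s3 {f : ℝ → ℝ} {a d : ℝ} (hd : HasDerivWithinAt f d (Ioi a) a)
    (hmin : ∀ᶠ x in 𝓝[>] a, f a ≤ f x) : 0 ≤ d := by
  rw [hasDerivWithinAt_iff_tendsto_slope] at hd
  rw [show Ioi a \ {a} = Ioi a from diff_singleton_eq_self (by simp)] at hd
  refine ge_of_tendsto hd ?_
  filter_upwards [hmin, self_mem_nhdsWithin] with x hx hx'
  rw [slope_def_field]
  exact div_nonneg (by linarith) (by simp at hx'; linarith)

lemma scale_deriv {u : ℝ → ℝ} {θ : ℝ} (hθ : θ ≠ 0) {r : ℝ}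
    (h : ContDiffAt ℝ 2 u (r / θ)) :
    ContDiffAt ℝ 2 (fun s => u (s / θ)) r ∧
    deriv (fun s => u (s / θ)) r = deriv u (r / θ) * (1 / θ) ∧
    deriv (deriv (fun s => u (s / θ))) r = deriv (deriv u) (r / θ) * (1 / θ) * (1 / θ) := by
  obtain ⟨U, hUo, hUm, hUd, hUd2, hUc⟩ := c2_package h
  have hm : ContDiffAt ℝ 2 (fun s : ℝ => s / θ) r := (contDiff_id.div_const θ).contDiffAt
  have hc2 : ContDiffAt ℝ 2 (fun s => u (s / θ)) r := h.comp r hm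
  set V : Set ℝ := (fun s : ℝ => s / θ) ⁻¹' U with hV
  have hVo : IsOpen V := hUo.preimage (continuous_id.div_const θ)
  have hVm : r ∈ V := hUm
  have hder : ∀ s ∈ V, HasDerivAt (fun t => u (t / θ)) (deriv u (s / θ) * (1 / θ)) s := by
    intro s hs
    exact ((hUd _ hs).hasDerivAt).comp s ((hasDerivAt_id s).div_const θ)
  have hd1 : deriv (fun s => u (s / θ)) r = deriv u (r / θ) * (1 / θ) :=
    (hder r hVm).deriv
  refine ⟨hc2, hd1, ?_⟩
  have hev : deriv (fun s => u (s / θ)) =ᶠ[𝓝 r] fun s => deriv u (s / θ) * (1 / θ) := by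
    filter_upwards [hVo.mem_nhds hVm] with s hs
    exact (hder s hs).deriv
  rw [hev.deriv_eq]
  have : HasDerivAt (fun s => deriv u (s / θ) * (1 / θ))
      (deriv (deriv u) (r / θ) * (1 / θ) * (1 / θ)) r := by
    exact (((hUd2 _ hUm).hasDerivAt).comp r ((hasDerivAt_id r).div_const θ)).mul_const (1 / θ)
  exact this.deriv

lemma key_local (p K : ℝ) (hp : 0 ≤ p) (hK : 0 ≤ K) (w : ℝ → ℝ) (a δ : ℝ)
    (hbpos : 0 < a - δ) (hδ : 0 < δ)
    (hC2 : ∀ x ∈ Icc (a - δ) (a + δ), ContDiffAt ℝ 2 w x)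
    (hineq : ∀ x ∈ Icc (a - δ) (a + δ),
      deriv (deriv w) x + (p / x) * deriv w x ≤ K * w x)
    (hpos : ∀ x ∈ Icc (a - δ) (a + δ), 0 ≤ w x)
    (hw0 : w a = 0) :
    ∃ δ' > 0, δ' ≤ δ ∧ ∀ x ∈ Icc (a - δ') (a + δ'), w x = 0 := by
  set b := a - δ with hbdef
  set B := a + δ with hBdef
  have haI : a ∈ Icc b B := by constructor <;> simp [hbdef, hBdef] <;> linarith
  have hx0 : ∀ x ∈ Icc b B, 0 < x := fun x hx => lt_of_lt_of_le hbpos hx.1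
  -- differentiability facts on the interval
  have hpack : ∀ x ∈ Icc b B, DifferentiableAt ℝ w x ∧ DifferentiableAt ℝ (deriv w) x
      ∧ ContinuousAt (deriv w) x := by
    intro x hx
    obtain ⟨U, hUo, hUm, h1, h2, h3⟩ := c2_package (hC2 x hx)
    exact ⟨h1 x hUm, h2 x hUm, (h3.continuousAt (hUo.mem_nhds hUm))⟩
  -- the function g
  set g : ℝ → ℝ := fun t => t ^ p * deriv w t with hgdef
  have hg : ∀ x ∈ Icc b B,
      HasDerivAt g (x ^ p * (deriv (deriv w) x + (p / x) * deriv w x)) x := by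
    intro x hx
    have hxne : x ≠ 0 := (hx0 x hx).ne'
    have h1 : HasDerivAt (fun t : ℝ => t ^ p) (p * x ^ (p - 1)) x :=
      Real.hasDerivAt_rpow_const (Or.inl hxne)
    have h2 := (h1.mul (hpack x hx).2.1.hasDerivAt)
    refine h2.congr_deriv ?_
    rw [Real.rpow_sub_one hxne]
    ring
  have hgc : ContinuousOn g (Icc b B) := by
    intro x hx
    exact (((Real.continuousAt_rpow_const x p (Or.inl (hx0 x hx).ne')).mul
      (hpack x hx).2.2)).continuousWithinAt
  -- derivative of w vanishes at a
  have hwa : deriv w a = 0 := by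
    have hmin : IsLocalMin w a := by
      have : Icc b B ∈ 𝓝 a := Icc_mem_nhds (by simp [hbdef]; linarith) (by simp [hBdef]; linarith)
      filter_upwards [this] with x hx
      rw [hw0]; exact hpos x hx
    exact hmin.deriv_eq_zero
  have hga : g a = 0 := by simp [hgdef, hwa]
  -- constants
  have hbp : (0:ℝ) < b ^ p := Real.rpow_pos_of_pos hbpos p
  set C1 : ℝ := K * B ^ p with hC1def
  have hC1 : 0 ≤ C1 := mul_nonneg hK (Real.rpow_pos_of_pos (lt_of_lt_of_le hbpos (by simp [hbdef, hBdef]; linarith)) p).le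
  set C2 : ℝ := C1 / b ^ p with hC2def
  have hC2 : 0 ≤ C2 := div_nonneg hC1 hbp.le
  clear_value C1 C2
  set δ' : ℝ := min δ (1 / (1 + C2)) with hδ'def
  have hδ'pos : 0 < δ' := lt_min hδ (by positivity)
  have hδ'le : δ' ≤ δ := min_le_left _ _
  have hδ'leB : δ' ≤ 1 / (1 + C2) := min_le_right _ _
  clear_value δ'
  have hsmall : C2 * δ' ^ 2 / 2 < 1 := by
    have h2 : (0:ℝ) < 1 + C2 := by linarith
    have h3 : δ' * (1 + C2) ≤ 1 := by
      rw [← le_div_iff₀ h2]; exact hδ'leB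
    nlinarith [hδ'pos, hC2]
  set J := Icc (a - δ') (a + δ') with hJdef
  have hJsub : J ⊆ Icc b B := Icc_subset_Icc (by simp [hbdef]; linarith) (by simp [hBdef]; linarith)
  have haJ : a ∈ J := by constructor <;> simp <;> linarith
  -- maximum of w on J
  have hwc : ContinuousOn w J := fun x hx => ((hpack x (hJsub hx)).1.continuousAt).continuousWithinAt
  obtain ⟨xm, hxm, hmax⟩ := isCompact_Icc.exists_isMaxOn ⟨a, haJ⟩ hwc
  set M := w xm with hMdef
  have hM0 : 0 ≤ M := hpos xm (hJsub hxm)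
  have hmax' : ∀ x ∈ J, w x ≤ M := fun x hx => hmax hx
  clear_value M
  -- derivative bound for g
  have hgd : ∀ x ∈ J, deriv (fun y => g y - C1 * M * y) x ≤ 0 ∧
      HasDerivAt (fun y => g y - C1 * M * y)
        (x ^ p * (deriv (deriv w) x + (p / x) * deriv w x) - C1 * M) x := by
    intro x hx
    have hxI := hJsub hx
    have hD : HasDerivAt (fun y => g y - C1 * M * y)
        (x ^ p * (deriv (deriv w) x + (p / x) * deriv w x) - C1 * M) x := by
      exact ((hg x hxI).sub ((hasDerivAt_id x).const_mul (C1 * M))).congr_deriv (by ring)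
    refine ⟨?_, hD⟩
    rw [hD.deriv]
    have h1 : x ^ p * (deriv (deriv w) x + (p / x) * deriv w x) ≤ x ^ p * (K * w x) :=
      mul_le_mul_of_nonneg_left (hineq x hxI) (Real.rpow_pos_of_pos (hx0 x hxI) p).le
    have h2 : x ^ p * (K * w x) ≤ B ^ p * (K * w x) := by
      apply mul_le_mul_of_nonneg_right _ (mul_nonneg hK (hpos x hxI))
      exact Real.rpow_le_rpow (hx0 x hxI).le hxI.2 hp
    have h3 : B ^ p * (K * w x) = C1 * w x := by rw [hC1def]; ring
    have h4 : C1 * w x ≤ C1 * M := mul_le_mul_of_nonneg_left (hmax' x hx) hC1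
    linarith
  -- G antitone on J
  have hGanti : AntitoneOn (fun y => g y - C1 * M * y) J := by
    apply antitoneOn_of_deriv_nonpos (convex_Icc _ _)
    · exact (hgc.mono hJsub).sub ((continuous_const.mul continuous_id).continuousOn)
    · intro x hx
      rw [interior_Icc] at hx
      exact ((hgd x (Ioo_subset_Icc_self hx)).2).differentiableAt.differentiableWithinAt
    · intro x hx
      rw [interior_Icc] at hx
      exact (hgd x (Ioo_subset_Icc_self hx)).1
  -- bounds on g
  have hgR : ∀ x ∈ J, a ≤ x → g x ≤ C1 * M * (x - a) := by
    intro x hx hax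
    have := hGanti haJ hx hax
    simp only [hga] at this
    linarith
  have hgL : ∀ x ∈ J, x ≤ a → C1 * M * (x - a) ≤ g x := by
    intro x hx hax
    have := hGanti hx haJ hax
    simp only [hga] at this
    linarith
  -- bounds on deriv w
  have hdwR : ∀ x ∈ J, a ≤ x → deriv w x ≤ C2 * M * (x - a) := by
    intro x hx hax
    have hxp : (0:ℝ) < x ^ p := Real.rpow_pos_of_pos (hx0 x (hJsub hx)) p
    have hbx : b ^ p ≤ x ^ p := Real.rpow_le_rpow hbpos.le (hJsub hx).1 hp
    have h1 : x ^ p * deriv w x ≤ C1 * M * (x - a) := hgR x hx hax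
    have h2 : deriv w x ≤ C1 * M * (x - a) / x ^ p := by
      rw [le_div_iff₀ hxp]; linarith [h1]
    have h3 : C1 * M * (x - a) / x ^ p ≤ C1 * M * (x - a) / b ^ p :=
      div_le_div_of_nonneg_left (by nlinarith [mul_nonneg hC1 hM0]) hbp hbx
    have h4 : C1 * M * (x - a) / b ^ p = C2 * M * (x - a) := by
      rw [hC2def]; ring
    linarith
  have hdwL : ∀ x ∈ J, x ≤ a → C2 * M * (x - a) ≤ deriv w x := by
    intro x hx hax
    have hxp : (0:ℝ) < x ^ p := Real.rpow_pos_of_pos (hx0 x (hJsub hx)) p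
    have hbx : b ^ p ≤ x ^ p := Real.rpow_le_rpow hbpos.le (hJsub hx).1 hp
    have h1 : C1 * M * (x - a) ≤ x ^ p * deriv w x := hgL x hx hax
    have h2 : C1 * M * (x - a) / x ^ p ≤ deriv w x := by
      rw [div_le_iff₀ hxp]; nlinarith [h1]
    have h4 : C1 * M * (a - x) / x ^ p ≤ C1 * M * (a - x) / b ^ p :=
      div_le_div_of_nonneg_left (by nlinarith [mul_nonneg hC1 hM0]) hbp hbx
    have e1 : C1 * M * (x - a) / x ^ p = -(C1 * M * (a - x) / x ^ p) := by ring
    have e2 : C2 * M * (x - a) = -(C1 * M * (a - x) / b ^ p) := by rw [hC2def]; ring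
    linarith
  -- quadratic barrier, both halves
  have hquad : ∀ x : ℝ, HasDerivAt (fun y => C2 * M * ((y - a) ^ 2 / 2)) (C2 * M * (x - a)) x := by
    intro x
    have h := (((hasDerivAt_id x).sub_const a).pow 2).div_const 2
    have h2 := h.const_mul (C2 * M)
    refine h2.congr_deriv ?_
    norm_num <;> ring
  have hHder : ∀ x ∈ J, HasDerivAt (fun y => w y - C2 * M * ((y - a) ^ 2 / 2))
      (deriv w x - C2 * M * (x - a)) x := by
    intro x hx
    exact ((hpack x (hJsub hx)).1.hasDerivAt).sub (hquad x)
  have hHcont : ContinuousOn (fun y => w y - C2 * M * ((y - a) ^ 2 / 2)) J :=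
    fun x hx => ((hHder x hx).differentiableAt.continuousAt).continuousWithinAt
  have hwleR : ∀ x ∈ Icc a (a + δ'), w x ≤ C2 * M * ((x - a) ^ 2 / 2) := by
    have hsubJ : Icc a (a + δ') ⊆ J := Icc_subset_Icc (by simp; linarith) le_rfl
    have hanti : AntitoneOn (fun y => w y - C2 * M * ((y - a) ^ 2 / 2)) (Icc a (a + δ')) := by
      apply antitoneOn_of_deriv_nonpos (convex_Icc _ _) (hHcont.mono hsubJ)
      · intro x hx
        rw [interior_Icc] at hx
        exact (hHder x (hsubJ (Ioo_subset_Icc_self hx))).differentiableAt.differentiableWithinAt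
      · intro x hx
        rw [interior_Icc] at hx
        rw [(hHder x (hsubJ (Ioo_subset_Icc_self hx))).deriv]
        have := hdwR x (hsubJ (Ioo_subset_Icc_self hx)) hx.1.le
        linarith
    intro x hx
    have h1 := hanti (left_mem_Icc.2 (by linarith)) hx hx.1
    simp only [hw0] at h1
    simp at h1
    linarith [h1]
  have hwleL : ∀ x ∈ Icc (a - δ') a, w x ≤ C2 * M * ((x - a) ^ 2 / 2) := by
    have hsubJ : Icc (a - δ') a ⊆ J := Icc_subset_Icc le_rfl (by simp; linarith)
    have hmono : MonotoneOn (fun y => w y - C2 * M * ((y - a) ^ 2 / 2)) (Icc (a - δ') a) := by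
      apply monotoneOn_of_deriv_nonneg (convex_Icc _ _) (hHcont.mono hsubJ)
      · intro x hx
        rw [interior_Icc] at hx
        exact (hHder x (hsubJ (Ioo_subset_Icc_self hx))).differentiableAt.differentiableWithinAt
      · intro x hx
        rw [interior_Icc] at hx
        rw [(hHder x (hsubJ (Ioo_subset_Icc_self hx))).deriv]
        have := hdwL x (hsubJ (Ioo_subset_Icc_self hx)) hx.2.le
        linarith
    intro x hx
    have h1 := hmono hx (right_mem_Icc.2 (by linarith)) hx.2
    simp only [hw0] at h1
    simp at h1
    linarith [h1]
  -- conclude M = 0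
  have hMbound : M ≤ C2 * M * (δ' ^ 2 / 2) := by
    obtain ⟨h1, h2⟩ : a - δ' ≤ xm ∧ xm ≤ a + δ' := hxm
    have hxb : (xm - a) ^ 2 ≤ δ' ^ 2 := sq_le_sq' (by linarith) (by linarith)
    have : w xm ≤ C2 * M * ((xm - a) ^ 2 / 2) := by
      rcases le_total xm a with h | h
      · exact hwleL xm ⟨h1, h⟩
      · exact hwleR xm ⟨h, h2⟩
    calc M = w xm := hMdef
    _ ≤ C2 * M * ((xm - a) ^ 2 / 2) := this
    _ ≤ C2 * M * (δ' ^ 2 / 2) := by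
        apply mul_le_mul_of_nonneg_left _ (mul_nonneg hC2 hM0)
        linarith
  have hMz : M ≤ 0 := by
    by_contra hMpos
    push_neg at hMpos
    have h1 := mul_lt_mul_of_pos_right hsmall hMpos
    have e : C2 * M * (δ' ^ 2 / 2) = C2 * δ' ^ 2 / 2 * M := by ring
    linarith
  exact ⟨δ', hδ'pos, hδ'le, fun x hx =>
    le_antisymm (le_trans (hmax' x hx) hMz) (hpos x (hJsub hx))⟩

set_option maxHeartbeats 2000000 in
/-- if for some `θ ∈ (0,1]` one has `ū(·/θ) ≥ u̲` on `(0,∞)` with equality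
somewhere, then `θ = 1` and `ū ≡ u̲` on `(0,∞)`. -/
theorem stmt3 (p q sp : ℝ) (hp : 0 ≤ p) (hq : 0 < q) (hsp : 0 < sp)
    (F : ℝ → ℝ) (hF : CondF F sp)
    (ub lb : ℝ → ℝ) (αb αl βb βl : ℝ)
    (hsuper : IsSuperSolutionOn p q F (Set.Ioi 0) ub)
    (hsub : IsSubSolutionOn p q F (Set.Ioi 0) lb)
    (hubnd : ∀ r ∈ Set.Ioi (0:ℝ), 0 ≤ ub r ∧ ub r ≤ sp)
    (hlbnd : ∀ r ∈ Set.Ioi (0:ℝ), 0 ≤ lb r ∧ lb r ≤ sp)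
    (hαb : 0 < αb)
    (h0ub : AsympZero ub αb (gammaPlus p q))
    (h0lb : AsympZero lb αl (gammaPlus p q))
    (hβl : 0 < βl)
    (hiub : AsympInfty ub sp βb)
    (hilb : AsympInfty lb sp βl)
    (θ : ℝ) (hθ0 : 0 < θ) (hθ1 : θ ≤ 1)
    (hge : ∀ r : ℝ, 0 < r → lb r ≤ ub (r / θ))
    (r₀ : ℝ) (hr₀ : 0 < r₀) (heq : ub (r₀ / θ) = lb r₀) :
    θ = 1 ∧ ∀ r : ℝ, 0 < r → ub r = lb r := by
  classical
  have hθne : θ ≠ 0 := hθ0.ne'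
  obtain ⟨hFc1, hF0, hFsp, hFneg, hFpos', hF'⟩ := hF
  obtain ⟨hlipu, Su, hSu_fin, hSu_reg, hSu_jmp⟩ := hsuper
  obtain ⟨hlipl, Sl, hSl_fin, hSl_reg, hSl_jmp⟩ := hsub
  -- F is nonpositive on [0, sp]
  have hFnp : ∀ t : ℝ, 0 ≤ t → t ≤ sp → F t ≤ 0 := by
    intro t h0 h1
    rcases eq_or_lt_of_le h0 with h | h
    · rw [← h, hF0]
    rcases eq_or_lt_of_le h1 with h' | h'
    · rw [h', hFsp]
    exact (hFneg t ⟨h, h'⟩).le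
  -- Lipschitz-type bound for F on [0, sp]
  obtain ⟨K₀, hK₀⟩ := (isCompact_Icc (a := (0:ℝ)) (b := sp)).exists_bound_of_continuousOn
    ((hFc1.continuous_deriv le_rfl).continuousOn)
  set Kf : ℝ := max K₀ 0 with hKfdef
  have hKf0 : 0 ≤ Kf := le_max_right _ _
  have hFlip : ∀ x y : ℝ, x ∈ Icc 0 sp → y ∈ Icc 0 sp → |F x - F y| ≤ Kf * |x - y| := by
    intro x y hx hy
    have := Convex.norm_image_sub_le_of_norm_deriv_le
      (f := F) (s := Icc (0:ℝ) sp) (C := Kf)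
      (fun z _ => (hFc1.differentiable one_ne_zero).differentiableAt)
      (fun z hz => le_trans (hK₀ z hz) (le_max_left _ _)) (convex_Icc _ _) hy hx
    simpa [Real.norm_eq_abs] using this
  -- the rescaled supersolution and the difference
  set v : ℝ → ℝ := fun r => ub (r / θ) with hvdef
  set w : ℝ → ℝ := fun r => v r - lb r with hwdef
  -- bad set for w
  set T : Set ℝ := ((fun s : ℝ => s * θ) '' Su) ∪ Sl with hTdef
  have hTu : ∀ r : ℝ, r ∉ T → r / θ ∉ Su := by
    intro r hrT hmem
    exact hrT (Or.inl ⟨r / θ, hmem, by field_simp⟩)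
  have hTl : ∀ r : ℝ, r ∉ T → r ∉ Sl := fun r hrT hmem => hrT (Or.inr hmem)
  -- local finiteness of T
  have hTfin : ∀ x : ℝ, 0 < x → ∃ ε > 0, (T ∩ Ioo (x - ε) (x + ε)).Finite := by
    intro x hx
    obtain ⟨ε₁, hε₁, hfin₁⟩ := hSu_fin (x / θ) (by exact div_pos hx hθ0)
    obtain ⟨ε₂, hε₂, hfin₂⟩ := hSl_fin x hx
    refine ⟨min (ε₁ * θ) ε₂, lt_min (by positivity) hε₂, ?_⟩
    set ε := min (ε₁ * θ) ε₂ with hεdef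
    have h1 : T ∩ Ioo (x - ε) (x + ε) ⊆
        ((fun s : ℝ => s * θ) '' (Su ∩ Ioo (x / θ - ε₁) (x / θ + ε₁))) ∪
        (Sl ∩ Ioo (x - ε₂) (x + ε₂)) := by
      rintro y ⟨hyT, hy1, hy2⟩
      have hεe1 : ε ≤ ε₁ * θ := min_le_left _ _
      have hεe2 : ε ≤ ε₂ := min_le_right _ _
      rcases hyT with ⟨s, hsSu, rfl⟩ | hySl
      · left
        refine ⟨s, ⟨hsSu, ?_, ?_⟩, rfl⟩
        · have hy1' : x - ε < s * θ := hy1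
          have h1 : (x - ε) / θ < s := (div_lt_iff₀ hθ0).2 (by linarith)
          have h2 : (x - ε) / θ = x / θ - ε / θ := by ring
          have h3 : ε / θ ≤ ε₁ := (div_le_iff₀ hθ0).2 (by linarith)
          linarith
        · have hy2' : s * θ < x + ε := hy2
          have h1 : s < (x + ε) / θ := (lt_div_iff₀ hθ0).2 (by linarith)
          have h2 : (x + ε) / θ = x / θ + ε / θ := by ring
          have h3 : ε / θ ≤ ε₁ := (div_le_iff₀ hθ0).2 (by linarith)
          linarith
      · right
        exact ⟨hySl, by constructor <;> linarith⟩
    exact (((hfin₁.image _).union hfin₂).subset h1)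
  -- continuity of w on the positive reals
  have hcont_ub : ∀ x : ℝ, 0 < x → ContinuousAt ub x := by
    intro x hx
    obtain ⟨K, t, ht, hl⟩ := hlipu x hx
    have ht' : t ∈ 𝓝 x := by
      rwa [nhdsWithin_eq_nhds.2 (isOpen_Ioi.mem_nhds hx)] at ht
    exact (hl.continuousOn.continuousWithinAt (mem_of_mem_nhds ht')).continuousAt ht'
  have hcont_lb : ∀ x : ℝ, 0 < x → ContinuousAt lb x := by
    intro x hx
    obtain ⟨K, t, ht, hl⟩ := hlipl x hx
    have ht' : t ∈ 𝓝 x := by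
      rwa [nhdsWithin_eq_nhds.2 (isOpen_Ioi.mem_nhds hx)] at ht
    exact (hl.continuousOn.continuousWithinAt (mem_of_mem_nhds ht')).continuousAt ht'
  have hcont_w : ∀ x : ℝ, 0 < x → ContinuousAt w x := by
    intro x hx
    have h1 : ContinuousAt v x :=
      ContinuousAt.comp (g := ub) (f := fun r : ℝ => r / θ) (x := x)
        (hcont_ub (x / θ) (div_pos hx hθ0)) (continuousAt_id.div_const θ)
    exact h1.sub (hcont_lb x hx)
  -- nonnegativity and the zero at r₀
  have hwnn : ∀ r : ℝ, 0 < r → 0 ≤ w r := fun r hr => sub_nonneg.2 (hge r hr)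
  have hwr₀ : w r₀ = 0 := by simp only [hwdef, hvdef]; rw [heq]; ring
  -- differential inequality and regularity at good points
  have hgood : ∀ r : ℝ, 0 < r → r ∉ T → ContDiffAt ℝ 2 w r ∧
      deriv (deriv w) r + (p / r) * deriv w r - (q / r ^ 2) * w r ≤ Kf * w r := by
    intro r hr hrT
    have hs : 0 < r / θ := div_pos hr hθ0
    obtain ⟨hubC2, hubineq⟩ := hSu_reg (r / θ) ⟨hs, hTu r hrT⟩
    obtain ⟨hlbC2, hlbineq⟩ := hSl_reg r ⟨hr, hTl r hrT⟩
    obtain ⟨hvC2, hvd1, hvd2⟩ := scale_deriv hθne hubC2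
    have hvC2' : ContDiffAt ℝ 2 v r := hvC2
    have hwC2 : ContDiffAt ℝ 2 w r := hvC2'.sub hlbC2
    refine ⟨hwC2, ?_⟩
    -- L[v](r) ≤ F (v r)
    have hθsq : (0:ℝ) < θ ^ 2 := by positivity
    have hvub : v r = ub (r / θ) := rfl
    have hLv : deriv (deriv v) r + (p / r) * deriv v r - (q / r ^ 2) * v r ≤ F (v r) := by
      rw [hvub, show deriv (deriv v) r = deriv (deriv ub) (r / θ) * (1/θ) * (1/θ) from hvd2,
        show deriv v r = deriv ub (r / θ) * (1/θ) from hvd1]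
      have hident : deriv (deriv ub) (r / θ) * (1/θ) * (1/θ)
          + (p / r) * (deriv ub (r / θ) * (1/θ)) - (q / r ^ 2) * ub (r / θ)
          = (deriv (deriv ub) (r / θ) + (p / (r / θ)) * deriv ub (r / θ)
            - (q / (r / θ) ^ 2) * ub (r / θ)) / θ ^ 2 := by
        field_simp
      rw [hident]
      have hFn : F (ub (r / θ)) ≤ 0 :=
        hFnp _ (hubnd _ hs).1 (hubnd _ hs).2
      have h1 : (deriv (deriv ub) (r / θ) + (p / (r / θ)) * deriv ub (r / θ)
          - (q / (r / θ) ^ 2) * ub (r / θ)) / θ ^ 2 ≤ F (ub (r / θ)) / θ ^ 2 := by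
        exact (div_le_div_iff_of_pos_right hθsq).2 hubineq
      have hθsq1 : θ ^ 2 ≤ 1 := by nlinarith
      have h2 : F (ub (r / θ)) / θ ^ 2 ≤ F (ub (r / θ)) := by
        rw [div_le_iff₀ hθsq]
        nlinarith [hFn, hθsq1]
      linarith
    -- derivatives of w
    obtain ⟨U₁, hU₁o, hU₁m, hU₁d, hU₁d2, -⟩ := c2_package hvC2'
    obtain ⟨U₂, hU₂o, hU₂m, hU₂d, hU₂d2, -⟩ := c2_package hlbC2
    have hwd1ev : deriv w =ᶠ[𝓝 r] fun x => deriv v x - deriv lb x := by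
      filter_upwards [hU₁o.mem_nhds hU₁m, hU₂o.mem_nhds hU₂m] with y hy1 hy2
      exact deriv_sub (hU₁d y hy1) (hU₂d y hy2)
    have hwd1 : deriv w r = deriv v r - deriv lb r := deriv_sub (hU₁d r hU₁m) (hU₂d r hU₂m)
    have hwd2 : deriv (deriv w) r = deriv (deriv v) r - deriv (deriv lb) r := by
      rw [hwd1ev.deriv_eq]
      exact deriv_sub (hU₁d2 r hU₁m) (hU₂d2 r hU₂m)
    -- combine
    have hsub2 : deriv (deriv w) r + (p / r) * deriv w r - (q / r ^ 2) * w r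
        ≤ F (v r) - F (lb r) := by
      rw [hwd1, hwd2, show w r = v r - lb r from rfl]
      have e : deriv (deriv v) r - deriv (deriv lb) r + (p / r) * (deriv v r - deriv lb r)
          - (q / r ^ 2) * (v r - lb r)
          = (deriv (deriv v) r + (p / r) * deriv v r - (q / r ^ 2) * v r)
          - (deriv (deriv lb) r + (p / r) * deriv lb r - (q / r ^ 2) * lb r) := by ring
      rw [e]
      exact sub_le_sub hLv hlbineq
    have hFd : F (v r) - F (lb r) ≤ Kf * w r := by
      have h1 : |F (v r) - F (lb r)| ≤ Kf * |v r - lb r| :=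
        hFlip _ _ ⟨(hubnd _ hs).1, (hubnd _ hs).2⟩ ⟨(hlbnd r hr).1, (hlbnd r hr).2⟩
      have h2 : |v r - lb r| = w r := abs_of_nonneg (hwnn r hr)
      calc F (v r) - F (lb r) ≤ |F (v r) - F (lb r)| := le_abs_self _
      _ ≤ Kf * |v r - lb r| := h1
      _ = Kf * w r := by rw [h2]
    exact hsub2.trans hFd
  -- the zero set of w is open
  have hZopen : ∀ a : ℝ, 0 < a → w a = 0 →
      ∃ δ'' > 0, ∀ x ∈ Ioo (a - δ'') (a + δ''), 0 < x ∧ w x = 0 := by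
    intro a ha hwa
    -- a is not a jump point
    have haT : a ∉ T := by
      by_contra haT
      have hminl : ∀ᶠ x in 𝓝[<] a, w a ≤ w x := by
        have h0 : ∀ᶠ x in 𝓝 a, 0 < x := eventually_gt_nhds ha
        filter_upwards [h0.filter_mono nhdsWithin_le_nhds] with x hx
        rw [hwa]; exact hwnn x hx
      have hminr : ∀ᶠ x in 𝓝[>] a, w a ≤ w x := by
        have h0 : ∀ᶠ x in 𝓝 a, 0 < x := eventually_gt_nhds ha
        filter_upwards [h0.filter_mono nhdsWithin_le_nhds] with x hx
        rw [hwa]; exact hwnn x hx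
      have hsa : 0 < a / θ := div_pos ha hθ0
      have hmapIio : MapsTo (fun x : ℝ => x / θ) (Iio a) (Iio (a / θ)) := fun x hx =>
        (div_lt_div_iff_of_pos_right hθ0).2 hx
      have hmapIoi : MapsTo (fun x : ℝ => x / θ) (Ioi a) (Ioi (a / θ)) := fun x hx =>
        (div_lt_div_iff_of_pos_right hθ0).2 hx
      have hinner : HasDerivWithinAt (fun x : ℝ => x / θ) (1 / θ) (Iio a) a :=
        ((hasDerivAt_id a).div_const θ).hasDerivWithinAt
      have hinner' : HasDerivWithinAt (fun x : ℝ => x / θ) (1 / θ) (Ioi a) a :=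
        ((hasDerivAt_id a).div_const θ).hasDerivWithinAt
      have hvv : ∃ dl dr : ℝ, HasDerivWithinAt v dl (Iio a) a ∧
          HasDerivWithinAt v dr (Ioi a) a ∧
          dr ≤ dl ∧ (a ∈ (fun s : ℝ => s * θ) '' Su → dr < dl) := by
        by_cases h : a / θ ∈ Su
        · obtain ⟨dl, dr, hdl, hdr, hlt⟩ := hSu_jmp (a / θ) ⟨hsa, h⟩
          refine ⟨dl * (1 / θ), dr * (1 / θ), ?_, ?_, ?_, fun _ => ?_⟩
          · exact hdl.comp a hinner hmapIio
          · exact hdr.comp a hinner' hmapIoi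
          · exact mul_le_mul_of_nonneg_right hlt.le (by positivity)
          · exact mul_lt_mul_of_pos_right hlt (by positivity)
        · obtain ⟨hubC2, -⟩ := hSu_reg (a / θ) ⟨hsa, h⟩
          obtain ⟨hvC2, -, -⟩ := scale_deriv hθne hubC2
          have hd := (hvC2.differentiableAt two_ne_zero).hasDerivAt
          refine ⟨_, _, hd.hasDerivWithinAt, hd.hasDerivWithinAt, le_rfl, fun hmem => ?_⟩
          obtain ⟨s, hsSu, hsa'⟩ := hmem
          have : a / θ = s := by
            have hsa'' : s * θ = a := hsa'
            rw [← hsa'']; field_simp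
          exact absurd (this ▸ hsSu) h
      have hll : ∃ el er : ℝ, HasDerivWithinAt lb el (Iio a) a ∧
          HasDerivWithinAt lb er (Ioi a) a ∧
          el ≤ er ∧ (a ∈ Sl → el < er) := by
        by_cases h : a ∈ Sl
        · obtain ⟨el, er, h1, h2, h3⟩ := hSl_jmp a ⟨ha, h⟩
          exact ⟨el, er, h1, h2, h3.le, fun _ => h3⟩
        · obtain ⟨hlbC2, -⟩ := hSl_reg a ⟨ha, h⟩
          have hd := (hlbC2.differentiableAt two_ne_zero).hasDerivAt
          exact ⟨_, _, hd.hasDerivWithinAt, hd.hasDerivWithinAt, le_rfl,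
            fun hmem => absurd hmem h⟩
      obtain ⟨dl, dr, hdl, hdr, hdle, hdstrict⟩ := hvv
      obtain ⟨el, er, hel, her, hele, helstrict⟩ := hll
      have hDl : HasDerivWithinAt w (dl - el) (Iio a) a := hdl.sub hel
      have hDr : HasDerivWithinAt w (dr - er) (Ioi a) a := hdr.sub her
      have h1 : dl - el ≤ 0 := left_deriv_nonpos_s3 hDl hminl
      have h2 : 0 ≤ dr - er := right_deriv_nonneg_s3 hDr hminr
      rcases haT with hm | hm
      · have := hdstrict hm; linarith
      · have := helstrict hm; linarith
    -- find a jump-free closed interval around a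
    obtain ⟨ε, hε, hfin⟩ := hTfin a ha
    have hO : IsOpen ((Ioo (a - ε) (a + ε) \ (T ∩ Ioo (a - ε) (a + ε))) ∩ Ioi 0) :=
      (isOpen_Ioo.sdiff hfin.isClosed).inter isOpen_Ioi
    have haO : a ∈ (Ioo (a - ε) (a + ε) \ (T ∩ Ioo (a - ε) (a + ε))) ∩ Ioi 0 :=
      ⟨⟨⟨by linarith, by linarith⟩, fun h => haT h.1⟩, ha⟩
    obtain ⟨ρ, hρ, hball⟩ := Metric.isOpen_iff.1 hO a haO
    set δ := min (ρ / 2) (a / 2) with hδdef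
    have hδpos : 0 < δ := lt_min (by linarith) (by linarith)
    have hδρ : δ ≤ ρ / 2 := min_le_left _ _
    have hδa2 : δ ≤ a / 2 := min_le_right _ _
    clear_value δ
    have hδa : 0 < a - δ := by linarith
    have hsubI : ∀ x ∈ Icc (a - δ) (a + δ), 0 < x ∧ x ∉ T := by
      intro x hx
      obtain ⟨hxl, hxr⟩ : a - δ ≤ x ∧ x ≤ a + δ := hx
      have hxb : x ∈ Metric.ball a ρ := by
        rw [Metric.mem_ball, Real.dist_eq]
        rw [abs_lt]; constructor <;> linarith
      have h2 := hball hxb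
      exact ⟨h2.2, fun hT => h2.1.2 ⟨hT, h2.1.1⟩⟩
    set KK : ℝ := Kf + q / (a - δ) ^ 2 with hKKdef
    have hKK : 0 ≤ KK := add_nonneg hKf0 (div_nonneg hq.le (sq_nonneg _))
    clear_value KK
    have hC2all : ∀ x ∈ Icc (a - δ) (a + δ), ContDiffAt ℝ 2 w x :=
      fun x hx => (hgood x (hsubI x hx).1 (hsubI x hx).2).1
    have hineqall : ∀ x ∈ Icc (a - δ) (a + δ),
        deriv (deriv w) x + (p / x) * deriv w x ≤ KK * w x := by
      intro x hx
      obtain ⟨hx0, hxT⟩ := hsubI x hx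
      have h := (hgood x hx0 hxT).2
      have hqx : q / x ^ 2 ≤ q / (a - δ) ^ 2 := by
        apply div_le_div_of_nonneg_left hq.le (by positivity)
        have := hx.1
        nlinarith
      have h2 : q / x ^ 2 * w x ≤ q / (a - δ) ^ 2 * w x :=
        mul_le_mul_of_nonneg_right hqx (hwnn x hx0)
      rw [hKKdef]
      nlinarith [h, h2]
    have hposall : ∀ x ∈ Icc (a - δ) (a + δ), 0 ≤ w x :=
      fun x hx => hwnn x (hsubI x hx).1
    obtain ⟨δ', hδ'pos, hδ'le, hzero⟩ :=
      key_local p KK hp hKK w a δ hδa hδpos hC2all hineqall hposall hwa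
    refine ⟨δ', hδ'pos, fun x hx => ?_⟩
    have hx1 := hx.1
    have hx2 := hx.2
    exact ⟨by linarith, hzero x ⟨by linarith, by linarith⟩⟩
  -- w vanishes identically on the positive reals
  have hZ : ∀ r : ℝ, 0 < r → w r = 0 := by
    set Z : Set ℝ := {r : ℝ | 0 < r ∧ w r = 0} with hZdef
    have hZo : IsOpen Z := by
      rw [isOpen_iff_mem_nhds]
      rintro a ⟨ha, hwa⟩
      obtain ⟨δ'', hδ'', hzero⟩ := hZopen a ha hwa
      have hIoo : Ioo (a - δ'') (a + δ'') ∈ 𝓝 a := Ioo_mem_nhds (by linarith) (by linarith)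
      filter_upwards [hIoo] with x hx
      exact hzero x hx
    have hsub2 : Ioi (0:ℝ) ⊆ Z := by
      apply isPreconnected_Ioi.subset_of_closure_inter_subset hZo
        ⟨r₀, hr₀, hr₀, hwr₀⟩
      rintro x ⟨hxc, hx0⟩
      refine ⟨hx0, ?_⟩
      have hne : (𝓝[Z] x).NeBot := mem_closure_iff_nhdsWithin_neBot.1 hxc
      have h1 : Tendsto w (𝓝[Z] x) (𝓝 (w x)) :=
        ((hcont_w x hx0).continuousWithinAt)
      have h2 : Tendsto w (𝓝[Z] x) (𝓝 0) := by
        refine Tendsto.congr' ?_ tendsto_const_nhds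
        filter_upwards [self_mem_nhdsWithin] with y hy
        exact hy.2.symm
      exact tendsto_nhds_unique h1 h2
    exact fun r hr => (hsub2 hr).2
  have hZall : ∀ r : ℝ, 0 < r → ub (r / θ) = lb r := by
    intro r hr
    have := hZ r hr
    have h2 : v r - lb r = 0 := this
    have h3 : v r = ub (r / θ) := rfl
    linarith [h2, h3.symm.le]
  -- θ = 1
  have hγpos : 0 < gammaPlus p q := by
    rw [gammaPlus]
    have h1 : (p - 1) ^ 2 < (p - 1) ^ 2 + 4 * q := by linarith
    have h2 : Real.sqrt ((p - 1) ^ 2) < Real.sqrt ((p - 1) ^ 2 + 4 * q) :=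
      Real.sqrt_lt_sqrt (sq_nonneg _) h1
    rw [Real.sqrt_sq_eq_abs] at h2
    have h4 : p - 1 ≤ |p - 1| := le_abs_self _
    linarith
  have hθeq : θ = 1 := by
    by_contra hne
    have hθlt : θ < 1 := lt_of_le_of_ne hθ1 hne
    -- eventually near 0, ub is strictly between 0 and sp
    have hub_small : ∀ᶠ s in 𝓝[>] (0:ℝ), 0 < ub s ∧ ub s < sp := by
      have hrg : Tendsto (fun s : ℝ => s ^ (gammaPlus p q)) (𝓝[>] 0) (𝓝 0) := by
        have hc : ContinuousAt (fun s : ℝ => s ^ (gammaPlus p q)) 0 :=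
          Real.continuousAt_rpow_const 0 _ (Or.inr hγpos.le)
        have := hc.tendsto
        rw [Real.zero_rpow hγpos.ne'] at this
        exact this.mono_left nhdsWithin_le_nhds
      have hφ : ∀ᶠ s in 𝓝[>] (0:ℝ),
          |(ub s - αb * s ^ (gammaPlus p q)) / s ^ (gammaPlus p q)| < αb / 2 := by
        have := h0ub
        rw [AsympZero] at this
        have h2 := this.eventually (eventually_abs_sub_lt 0 (by positivity : (0:ℝ) < αb / 2))
        simpa using h2
      have hsmall2 : ∀ᶠ s in 𝓝[>] (0:ℝ), s ^ (gammaPlus p q) < sp / (2 * αb) := by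
        exact hrg.eventually_lt_const (by positivity)
      filter_upwards [hφ, hsmall2, self_mem_nhdsWithin] with s h1 h2 hs
      have hs0 : (0:ℝ) < s := hs
      have hsg : 0 < s ^ (gammaPlus p q) := Real.rpow_pos_of_pos hs0 _
      have hdecomp : ub s = (ub s - αb * s ^ (gammaPlus p q)) / s ^ (gammaPlus p q)
          * s ^ (gammaPlus p q) + αb * s ^ (gammaPlus p q) := by
        field_simp
        ring
      constructor
      · have hlow : -(αb / 2) < (ub s - αb * s ^ (gammaPlus p q)) / s ^ (gammaPlus p q) :=
          (abs_lt.1 h1).1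
        rw [hdecomp]
        nlinarith [mul_lt_mul_of_pos_right hlow hsg]
      · have hhigh : (ub s - αb * s ^ (gammaPlus p q)) / s ^ (gammaPlus p q) < αb / 2 :=
          (abs_lt.1 h1).2
        rw [hdecomp]
        have h2' : αb * s ^ (gammaPlus p q) < sp / 2 := by
          have he : αb * (sp / (2 * αb)) = sp / 2 := by field_simp
          have := mul_lt_mul_of_pos_left h2 hαb
          rw [he] at this
          exact this
        nlinarith [mul_lt_mul_of_pos_right hhigh hsg, h2', hsg, hαb]
    obtain ⟨ε₀, hε₀mem, hε₀⟩ := mem_nhdsGT_iff_exists_Ioo_subset.1 hub_small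
    have hε₀pos : 0 < ε₀ := hε₀mem
    -- pick a good point r
    set x₀ : ℝ := ε₀ * θ / 2 with hx₀def
    have hx₀pos : 0 < x₀ := by positivity
    obtain ⟨ε', hε', hfin'⟩ := hTfin x₀ hx₀pos
    set ε'' := min ε' (x₀ / 2) with hε''def
    have hε''pos : 0 < ε'' := lt_min hε' (by positivity)
    have hIinf : (Ioo x₀ (x₀ + ε'')).Infinite := Set.Ioo_infinite (by linarith)
    obtain ⟨r, hrIoo, hrTf⟩ := (hIinf.diff hfin').nonempty
    have hrpos : 0 < r := lt_trans hx₀pos hrIoo.1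
    have hrT : r ∉ T := by
      intro hT
      apply hrTf
      refine ⟨hT, ?_, ?_⟩
      · have : ε'' ≤ ε' := min_le_left _ _
        have := hrIoo.1
        linarith
      · have h1 : ε'' ≤ ε' := min_le_left _ _
        have := hrIoo.2
        linarith
    have hrsmall : r < ε₀ * θ := by
      have h1 : ε'' ≤ x₀ / 2 := min_le_right _ _
      have := hrIoo.2
      rw [hx₀def] at *
      linarith
    have hs : 0 < r / θ := div_pos hrpos hθ0
    have hsε₀ : r / θ < ε₀ := by
      rw [div_lt_iff₀ hθ0]
      linarith
    have hubs := hε₀ ⟨hs, hsε₀⟩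
    have hlbr : 0 < lb r ∧ lb r < sp := by
      rw [← hZall r hrpos]
      exact hubs
    have hFlb : F (lb r) < 0 := hFneg _ ⟨hlbr.1, hlbr.2⟩
    -- relate the operators
    obtain ⟨hubC2, hubineq⟩ := hSu_reg (r / θ) ⟨hs, hTu r hrT⟩
    obtain ⟨hlbC2, hlbineq⟩ := hSl_reg r ⟨hrpos, hTl r hrT⟩
    obtain ⟨hvC2, hvd1, hvd2⟩ := scale_deriv hθne hubC2
    have hveq : v =ᶠ[𝓝 r] lb := by
      filter_upwards [isOpen_Ioi.mem_nhds hrpos] with y hy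
      have h2 : v y - lb y = 0 := hZ y hy
      linarith
    have hveq' : deriv v =ᶠ[𝓝 r] deriv lb := by
      filter_upwards [isOpen_Ioi.mem_nhds hrpos] with y hy
      have : v =ᶠ[𝓝 y] lb := by
        filter_upwards [isOpen_Ioi.mem_nhds hy] with z hz
        have h2 : v z - lb z = 0 := hZ z hz
        linarith
      exact this.deriv_eq
    have he1 : deriv v r = deriv lb r := hveq.deriv_eq
    have he2 : deriv (deriv v) r = deriv (deriv lb) r := hveq'.deriv_eq
    have hvr : v r = lb r := by
      have h2 : v r - lb r = 0 := hZ r hrpos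
      linarith
    have hθsq : (0:ℝ) < θ ^ 2 := by positivity
    -- L[lb](r) = L[v](r) = θ⁻² L[ub](r/θ) ≤ θ⁻² F(ub (r/θ)) = θ⁻² F(lb r)
    have hLv : deriv (deriv lb) r + (p / r) * deriv lb r - (q / r ^ 2) * lb r
        ≤ F (lb r) / θ ^ 2 := by
      rw [← he1, ← he2, ← hvr,
        show deriv (deriv v) r = deriv (deriv ub) (r / θ) * (1/θ) * (1/θ) from hvd2,
        show deriv v r = deriv ub (r / θ) * (1/θ) from hvd1,
        show v r = ub (r / θ) from rfl]
      have hident : deriv (deriv ub) (r / θ) * (1/θ) * (1/θ)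
          + (p / r) * (deriv ub (r / θ) * (1/θ)) - (q / r ^ 2) * ub (r / θ)
          = (deriv (deriv ub) (r / θ) + (p / (r / θ)) * deriv ub (r / θ)
            - (q / (r / θ) ^ 2) * ub (r / θ)) / θ ^ 2 := by
        field_simp
      rw [hident]
      exact (div_le_div_iff_of_pos_right hθsq).2 hubineq
    have hcomb : F (lb r) ≤ F (lb r) / θ ^ 2 := le_trans hlbineq hLv
    rw [le_div_iff₀ hθsq] at hcomb
    have hθsq1 : θ ^ 2 < 1 := by nlinarith
    have hh := mul_lt_mul_of_neg_left hθsq1 hFlb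
    nlinarith [hcomb, hh]
  refine ⟨hθeq, fun r hr => ?_⟩
  have := hZall r hr
  rwa [hθeq, div_one] at this
end
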